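/- arXiv:2504.00301 — 4 statements merged into one kernel-verified Lean document; each statement's English description precedes it below -/
import Mathlib

section
/- For every integer N ≥ 1 and every parameter tuple (a,p) ∈ P^{2N}, there exists a unique stationary tuple for (a,p): there is exactly one vector s ∈ ℝ^N with 0 < s_1 < s_2 < ... < s_N such that a_i = Σ_{j=1}^N p_j·(s_i − s_j + s_1)_+ for every i ∈ {1,...,N}. -/
open Filter Topology
open scoped Classical

noncomputable section

/-- The positive part `x₊ = max x 0` of a real number. -/
def pos' (x : ℝ) : ℝ := max x 0

/-- `qq p i = p 1 + ... + p i` (so `qq p 0 = 0`). -/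
def qq (p : ℕ → ℝ) (i : ℕ) : ℝ := ∑ j ∈ Finset.Icc 1 i, p j

/-- `dpar a i = a i - a (i-1)`, with the convention `a 0 = 0`. -/
def dpar (a : ℕ → ℝ) (i : ℕ) : ℝ := if i = 1 then a 1 else a i - a (i - 1)

/-- `(a, p)` is a parameter tuple in `P^{2N}`:
`0 < a 1 < a 2 < ... < a N` and `p 1, ..., p N > 0`. -/
def IsParam (N : ℕ) (a p : ℕ → ℝ) : Prop :=
  0 < a 1 ∧ (∀ i, 1 ≤ i → i < N → a i < a (i + 1)) ∧ (∀ i, 1 ≤ i → i ≤ N → 0 < p i)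

/-- `s` is a stationary tuple for the parameters `(a, p)`:
`0 < s 1 < ... < s N` and `a i = ∑_{j=1}^N p j * (s i - s j + s 1)₊` for `1 ≤ i ≤ N`. -/
def IsStationaryTuple (N : ℕ) (a p s : ℕ → ℝ) : Prop :=
  0 < s 1 ∧ (∀ i, 1 ≤ i → i < N → s i < s (i + 1)) ∧
  ∀ i, 1 ≤ i → i ≤ N → a i = ∑ j ∈ Finset.Icc 1 N, p j * pos' (s i - s j + s 1)

/-- The inverse of (the restriction to `[0, ∞)` of) a function `y : ℝ → ℝ`. -/
def tinv (y : ℝ → ℝ) (x : ℝ) : ℝ := Function.invFunOn y (Set.Ici 0) x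

/-- The right derivative of `y` at `t` (the derivative of `y` at `t` within `[t, ∞)`). -/
def rD (y : ℝ → ℝ) (t : ℝ) : ℝ := derivWithin y (Set.Ici t) t

/-- The sequence `(y k)` satisfies recurrence (R).  The condition on the initial function `y 0`
(continuous, piecewise linear with at most `N` points of non-differentiability, vanishing at `0`,
with non-decreasing right derivative taking values in `{q 1, ..., q N}`) is encoded through its
canonical representation: such functions are exactly those of the form
`t ↦ ∑_{j=1}^N p j * (t - c j)₊` with `c` non-negative, non-decreasing and `c 1 = 0`. -/
def SatisfiesR (N : ℕ) (a p : ℕ → ℝ) (y : ℕ → ℝ → ℝ) : Prop :=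
  (∃ c : ℕ → ℝ, c 1 = 0 ∧ (∀ j, 1 ≤ j → j ≤ N → 0 ≤ c j) ∧
      (∀ j, 1 ≤ j → j < N → c j ≤ c (j + 1)) ∧
      ∀ t : ℝ, 0 ≤ t → y 0 t = ∑ j ∈ Finset.Icc 1 N, p j * pos' (t - c j)) ∧
  ∀ k : ℕ, ∀ t : ℝ, 0 ≤ t →
    y (k + 1) t = ∑ j ∈ Finset.Icc 1 N, p j * pos' (t - tinv (y k) (a j) + tinv (y k) (a 1))

/-- The breakpoints `c j` of the lower bounding trajectory `y₀⁻`: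
`c 1 = 0` and `c j = d 1 / q 1 + ∑_{l=2}^j d l / q (l-1)` for `j ≥ 2`. -/
def cminus (a p : ℕ → ℝ) (j : ℕ) : ℝ :=
  if j ≤ 1 then 0
  else a 1 / qq p 1 + ∑ l ∈ Finset.Icc 2 j, (a l - a (l - 1)) / qq p (l - 1)

/-- The lower bounding initial trajectory `y₀⁻`. -/
def yminus0 (N : ℕ) (a p : ℕ → ℝ) : ℝ → ℝ :=
  fun t => ∑ j ∈ Finset.Icc 1 N, p j * pos' (t - cminus a p j)

/-- The upper bounding initial trajectory `y₀⁺ : t ↦ q N * t`. -/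
def yplus0 (N : ℕ) (p : ℕ → ℝ) : ℝ → ℝ := fun t => qq p N * t

/-- The sequence satisfying recurrence (R) with prescribed initial term `y0`. -/
def iterR (N : ℕ) (a p : ℕ → ℝ) (y0 : ℝ → ℝ) : ℕ → ℝ → ℝ
  | 0 => y0
  | k + 1 => fun t =>
      ∑ j ∈ Finset.Icc 1 N,
        p j * pos' (t - tinv (iterR N a p y0 k) (a j) + tinv (iterR N a p y0 k) (a 1))

/-- `y` is a stationary trajectory: an increasing bijection of `[0,∞)` satisfying the
fixed-point equation of recurrence (R). -/
def IsStatTraj (N : ℕ) (a p : ℕ → ℝ) (y : ℝ → ℝ) : Prop :=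
  StrictMonoOn y (Set.Ici 0) ∧ Set.BijOn y (Set.Ici 0) (Set.Ici 0) ∧
  ∀ t : ℝ, 0 ≤ t → y t = ∑ j ∈ Finset.Icc 1 N, p j * pos' (t - tinv y (a j) + tinv y (a 1))

/-- `E_N`: the set of pairs `(i, j)` with `1 ≤ i < j ≤ N`. -/
def ENfin (N : ℕ) : Finset (ℕ × ℕ) :=
  (Finset.Icc 1 N ×ˢ Finset.Icc 1 N).filter fun e => e.1 < e.2

/-- `Nested e e'` means `e ≼_E e'`, i.e. `e` is nested in `e'`. -/
def Nested (e e' : ℕ × ℕ) : Prop := e'.1 ≤ e.1 ∧ e.1 < e.2 ∧ e.2 ≤ e'.2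

/-- `E` is the edge set of a downward closed graph on `{1, ..., N}`. -/
def IsDCGraph (N : ℕ) (E : Finset (ℕ × ℕ)) : Prop :=
  E ⊆ ENfin N ∧ ∀ e ∈ E, ∀ e' : ℕ × ℕ, Nested e' e → e' ∈ E

/-- `bG E i` is the greatest `j > i` with `(i, j) ∈ E`, and `i` if there is no such `j`;
by convention `bG E 0 = 1`. -/
def bG (E : Finset (ℕ × ℕ)) (i : ℕ) : ℕ :=
  if i = 0 then 1 else max i ((E.filter fun e => e.1 = i).sup fun e => e.2)

/-- `m(G)`: the maximal elements of `E` for `≼_E`. -/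
def maxE (E : Finset (ℕ × ℕ)) : Finset (ℕ × ℕ) :=
  E.filter fun e => ∀ e' ∈ E, Nested e e' → e' = e

/-- `M(G)`: the minimal elements of `E_N \ E` for `≼_E`. -/
def minNE (N : ℕ) (E : Finset (ℕ × ℕ)) : Finset (ℕ × ℕ) :=
  (ENfin N \ E).filter fun e => ∀ e' ∈ ENfin N \ E, Nested e' e → e' = e

/-- The map `T(G) : ℝ^N → ℝ^N`. -/
def TG (a p : ℕ → ℝ) (E : Finset (ℕ × ℕ)) (s : ℕ → ℝ) (i : ℕ) : ℝ :=
  (1 / qq p (bG E i)) * (a i + ∑ j ∈ Finset.Icc 1 (bG E i), p j * (s j - s 1))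

/-- The product of `γ` over the consecutive pairs (edges) of a list of vertices. -/
def pathProd (γ : ℕ → ℕ → ℝ) (l : List ℕ) : ℝ := (List.zipWith γ l l.tail).prod

/-- `Γ i j`: the sum, over all directed paths from `i` to `j` using edges of `E`, of the
product of `γ` over the edges of the path.  Since all edges of a DC graph increase, a directed
path from `i` to `j` is identified with the set `S ⊆ (i, j)` of its intermediate vertices,
subject to consecutive vertices being joined by edges of `E`. -/
def GammaPath (E : Finset (ℕ × ℕ)) (γ : ℕ → ℕ → ℝ) (i j : ℕ) : ℝ :=
  if i = j then 1
  else if i < j then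
    ∑ S ∈ (Finset.Ioo i j).powerset,
      if List.Chain' (fun u v => (u, v) ∈ E) (Finset.sort (insert i (insert j S)) (· ≤ ·))
      then pathProd γ (Finset.sort (insert i (insert j S)) (· ≤ ·)) else 0
  else 0

/-- The edge weight `γ^G_{i,j}`. -/
def gammaG (p : ℕ → ℝ) (E : Finset (ℕ × ℕ)) (i j : ℕ) : ℝ :=
  (qq p (bG E i) - qq p (max (j - 1) (bG E (i - 1)))) / qq p (bG E (i - 1))

/-- `Γ^G_{i,j}`. -/
def GammaG (p : ℕ → ℝ) (E : Finset (ℕ × ℕ)) (i j : ℕ) : ℝ := GammaPath E (gammaG p E) i j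

/-- `z_1^G (a, p)`. -/
def z1G (N : ℕ) (a p : ℕ → ℝ) (E : Finset (ℕ × ℕ)) : ℝ :=
  (∑ j ∈ Finset.Icc 1 N, GammaG p E 1 j * dpar a j / qq p (bG E (j - 1))) /
  (1 + ∑ j ∈ Finset.Icc 1 N,
      GammaG p E 1 j * (qq p (bG E j) - qq p (bG E (j - 1))) / qq p (bG E (j - 1)))

/-- `z_i^G (a, p)`. -/
def zG (N : ℕ) (a p : ℕ → ℝ) (E : Finset (ℕ × ℕ)) (i : ℕ) : ℝ :=
  if i = 1 then z1G N a p E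
  else
    (∑ j ∈ Finset.Icc i N, GammaG p E i j * dpar a j / qq p (bG E (j - 1))) -
      z1G N a p E *
        ∑ j ∈ Finset.Icc i N,
          GammaG p E i j * (qq p (bG E j) - qq p (bG E (j - 1))) / qq p (bG E (j - 1))

/-- `Z^G_{i,j} (a, p) = z_{i+1}^G + ... + z_j^G`. -/
def ZG (N : ℕ) (a p : ℕ → ℝ) (E : Finset (ℕ × ℕ)) (i j : ℕ) : ℝ :=
  ∑ l ∈ Finset.Icc (i + 1) j, zG N a p E l

/-- The DC graph `Gr(a, p)` read off from the stationary tuple `s = s(a, p)`: its edges are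
the pairs `(i, j) ∈ E_N` with `s 1 > s j - s i`. -/
def GrEdges (N : ℕ) (s : ℕ → ℝ) : Finset (ℕ × ℕ) :=
  (ENfin N).filter fun e => s e.2 - s e.1 < s 1

/-- `ζ` solves the linear system `S^G (a, p)`. -/
def SolvesS (N : ℕ) (a p : ℕ → ℝ) (E : Finset (ℕ × ℕ)) (ζ : ℕ → ℝ) : Prop :=
  ∀ i, 1 ≤ i → i ≤ N →
    a i = ∑ j ∈ Finset.Icc 1 (bG E i),
      p j * ((∑ l ∈ Finset.Icc 1 i, ζ l) - (∑ l ∈ Finset.Icc 1 j, ζ l) + ζ 1)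

/-- `P^{2N}`, viewed as a (cylinder) subset of the space of pairs of real sequences; only the
coordinates `a 1, ..., a N, p 1, ..., p N` are constrained. -/
def Pset (N : ℕ) : Set ((ℕ → ℝ) × (ℕ → ℝ)) := {ap | IsParam N ap.1 ap.2}

/-- The region `P_G = {(a, p) ∈ P^{2N} : Gr(a, p) = G}`. -/
def PGset (N : ℕ) (E : Finset (ℕ × ℕ)) : Set ((ℕ → ℝ) × (ℕ → ℝ)) :=
  {ap | IsParam N ap.1 ap.2 ∧ ∃ s : ℕ → ℝ, IsStationaryTuple N ap.1 ap.2 s ∧ GrEdges N s = E}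

/-- The boundary of `P_G` relative to `P^{2N}`.  Since `P^{2N}` is open, the closure of `P_G`
relative to `P^{2N}` is `closure (PGset N E) ∩ Pset N` and its relative interior is
`interior (PGset N E)`. -/
def relBoundary (N : ℕ) (E : Finset (ℕ × ℕ)) : Set ((ℕ → ℝ) × (ℕ → ℝ)) :=
  (closure (PGset N E) ∩ Pset N) \ interior (PGset N E)

/-- The trajectory `y^{(m)}` built from a tuple `s`:
`t ↦ ∑_{j=1}^N p j * (t - s j + s 1)₊`. -/
def trajOfS (N : ℕ) (p s : ℕ → ℝ) : ℝ → ℝ :=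
  fun t => ∑ j ∈ Finset.Icc 1 N, p j * pos' (t - s j + s 1)

/-- The DC graph `G^{(m)}` associated with a tuple `s`: its edges are the `(i, j) ∈ E_N` with
`t^{(m)} (a i) - s j + s 1 > 0`, where `t^{(m)}` is the inverse of `trajOfS N p s`. -/
def GrFromS (N : ℕ) (a p s : ℕ → ℝ) : Finset (ℕ × ℕ) :=
  (ENfin N).filter fun e => 0 < tinv (trajOfS N p s) (a e.1) - s e.2 + s 1


namespace Stmt0Aux

lemma pos'_nonneg (x : ℝ) : 0 ≤ pos' x := le_max_right _ _

lemma pos'_mono {x y : ℝ} (h : x ≤ y) : pos' x ≤ pos' y := max_le_max h le_rfl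

lemma pos'_of_nonneg {x : ℝ} (h : 0 ≤ x) : pos' x = x := max_eq_left h

lemma pos'_of_nonpos {x : ℝ} (h : x ≤ 0) : pos' x = 0 := max_eq_right h

lemma pos'_lt {x y : ℝ} (hy : 0 < y) (hxy : x < y) : pos' x < pos' y := by
  rw [pos'_of_nonneg hy.le]; exact max_lt hxy hy

lemma pos'_add_le {x c : ℝ} (hc : 0 ≤ c) : pos' (x + c) ≤ pos' x + c := by
  unfold pos'
  rcases le_total x 0 with h | h
  · rw [max_eq_right h]
    exact max_le (by linarith) (by linarith [le_max_left x 0, le_max_right x 0])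
  · rw [max_eq_left h, max_eq_left (by linarith)]

lemma continuous_pos' : Continuous pos' := continuous_id.max continuous_const

lemma pos'_self_le (x : ℝ) : x ≤ pos' x := le_max_left _ _

/-- The basic trajectory function. -/
def hfun (N : ℕ) (p : ℕ → ℝ) (S : ℕ → ℝ) (x : ℝ) : ℝ :=
  ∑ j ∈ Finset.Icc 1 N, p j * pos' (x - S j + S 1)


variable {N : ℕ} {a p : ℕ → ℝ}

lemma hfun_le (hp : ∀ j ∈ Finset.Icc 1 N, 0 ≤ p j) {S T : ℕ → ℝ} {x y : ℝ}
    (h : ∀ j ∈ Finset.Icc 1 N, x - S j + S 1 ≤ y - T j + T 1) :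
    hfun N p S x ≤ hfun N p T y :=
  Finset.sum_le_sum fun j hj => mul_le_mul_of_nonneg_left (pos'_mono (h j hj)) (hp j hj)

lemma hfun_mono (hp : ∀ j ∈ Finset.Icc 1 N, 0 ≤ p j) {S : ℕ → ℝ} {x y : ℝ} (hxy : x ≤ y) :
    hfun N p S x ≤ hfun N p S y :=
  hfun_le hp fun j _ => by linarith

lemma hfun_lt (hp : ∀ j ∈ Finset.Icc 1 N, 0 < p j) {S T : ℕ → ℝ} {x y : ℝ} {j0 : ℕ}
    (hj0 : j0 ∈ Finset.Icc 1 N)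
    (hall : ∀ j ∈ Finset.Icc 1 N, x - S j + S 1 ≤ y - T j + T 1)
    (hstrict : x - S j0 + S 1 < y - T j0 + T 1) (hposy : 0 < y - T j0 + T 1) :
    hfun N p S x < hfun N p T y :=
  Finset.sum_lt_sum
    (fun j hj => mul_le_mul_of_nonneg_left (pos'_mono (hall j hj)) (hp j hj).le)
    ⟨j0, hj0, mul_lt_mul_of_pos_left (pos'_lt hposy hstrict) (hp j0 hj0)⟩

lemma single_le_hfun (hp : ∀ j ∈ Finset.Icc 1 N, 0 ≤ p j) {S : ℕ → ℝ} {x : ℝ} {j0 : ℕ}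
    (hj0 : j0 ∈ Finset.Icc 1 N) :
    p j0 * pos' (x - S j0 + S 1) ≤ hfun N p S x :=
  Finset.single_le_sum (f := fun j => p j * pos' (x - S j + S 1))
    (fun j hj => mul_nonneg (hp j hj) (pos'_nonneg _)) hj0

lemma hfun_nonneg (hp : ∀ j ∈ Finset.Icc 1 N, 0 ≤ p j) (S : ℕ → ℝ) (x : ℝ) :
    0 ≤ hfun N p S x :=
  Finset.sum_nonneg fun j hj => mul_nonneg (hp j hj) (pos'_nonneg _)

lemma continuous_hfun (S : ℕ → ℝ) : Continuous (hfun N p S) :=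
  continuous_finset_sum _ fun _ _ =>
    continuous_const.mul (continuous_pos'.comp ((continuous_id.sub continuous_const).add
      continuous_const))

lemma hfun_tendsto (hN : 1 ≤ N) {Sk : ℕ → ℕ → ℝ} {xk : ℕ → ℝ} {S : ℕ → ℝ} {x : ℝ}
    (hS : ∀ j ∈ Finset.Icc 1 N, Filter.Tendsto (fun k => Sk k j) Filter.atTop (nhds (S j)))
    (hx : Filter.Tendsto xk Filter.atTop (nhds x)) :
    Filter.Tendsto (fun k => hfun N p (Sk k) (xk k)) Filter.atTop (nhds (hfun N p S x)) := by
  apply tendsto_finset_sum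
  intro j hj
  have h1 : Filter.Tendsto (fun k => Sk k 1) Filter.atTop (nhds (S 1)) :=
    hS 1 (by simp [Finset.mem_Icc]; omega)
  have harg : Filter.Tendsto (fun k => xk k - Sk k j + Sk k 1) Filter.atTop
      (nhds (x - S j + S 1)) := (hx.sub (hS j hj)).add h1
  exact tendsto_const_nhds.mul ((continuous_pos'.tendsto _).comp harg)

lemma Icc_split (hN : 1 ≤ N) : Finset.Icc 1 N = insert 1 (Finset.Icc 2 N) := by
  ext m; simp [Finset.mem_Icc, Finset.mem_insert]; omega

lemma hfun_expand (hN : 1 ≤ N) (S : ℕ → ℝ) (x : ℝ) :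
    hfun N p S x = p 1 * pos' x + ∑ j ∈ Finset.Icc 2 N, p j * pos' (x - S j + S 1) := by
  rw [hfun, Icc_split hN, Finset.sum_insert (by simp)]
  congr 2
  ring_nf


lemma mem1N (hN : 1 ≤ N) : (1 : ℕ) ∈ Finset.Icc 1 N := by simp [Finset.mem_Icc]; omega

lemma hfun_injlike (hp : ∀ j ∈ Finset.Icc 1 N, 0 < p j) {S : ℕ → ℝ} {x y b : ℝ} (hb : 0 < b)
    (hxy : x < y) (hx : hfun N p S x = b) (hy : hfun N p S y = b) : False := by
  have hex : ∃ j0 ∈ Finset.Icc 1 N, 0 < p j0 * pos' (x - S j0 + S 1) := by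
    by_contra h; push_neg at h
    have h0 : hfun N p S x ≤ 0 := Finset.sum_nonpos fun j hj => h j hj
    linarith
  obtain ⟨j0, hj0, hpos⟩ := hex
  have harg : 0 < x - S j0 + S 1 := by
    by_contra h; push_neg at h
    rw [pos'_of_nonpos h, mul_zero] at hpos; exact lt_irrefl 0 hpos
  have hlt := hfun_lt hp (S := S) (T := S) (x := x) (y := y) hj0
    (fun j hj => by linarith) (by linarith) (by linarith)
  rw [hx, hy] at hlt; exact lt_irrefl b hlt

lemma hfun_uniq (hp : ∀ j ∈ Finset.Icc 1 N, 0 < p j) {S : ℕ → ℝ} {x y b : ℝ} (hb : 0 < b)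
    (hx : hfun N p S x = b) (hy : hfun N p S y = b) : x = y := by
  rcases lt_trichotomy x y with h | h | h
  · exact absurd (hfun_injlike hp hb h hx hy) id
  · exact h
  · exact absurd (hfun_injlike hp hb h hy hx) id

def rootF (N : ℕ) (p S : ℕ → ℝ) (b : ℝ) : ℝ :=
  if h : ∃ x, hfun N p S x = b then h.choose else 0

lemma root_exists (hN : 1 ≤ N) (hp : ∀ j ∈ Finset.Icc 1 N, 0 < p j) (S : ℕ → ℝ) {b : ℝ}
    (hb : 0 < b) : ∃ x, hfun N p S x = b := by
  have hne : (Finset.Icc 1 N).Nonempty := ⟨1, mem1N hN⟩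
  set m := (Finset.Icc 1 N).inf' hne (fun j => S j - S 1) with hm
  have hm0 : hfun N p S m = 0 := Finset.sum_eq_zero fun j hj => by
    have h1 : m ≤ S j - S 1 := Finset.inf'_le _ hj
    rw [pos'_of_nonpos (by linarith), mul_zero]
  have hp1 : 0 < p 1 := hp 1 (mem1N hN)
  set hi := max m (b / p 1) with hhi
  have hble : b ≤ hfun N p S hi := by
    have h1 : p 1 * pos' (hi - S 1 + S 1) ≤ hfun N p S hi :=
      single_le_hfun (fun j hj => (hp j hj).le) (mem1N hN)
    have h2 : hi - S 1 + S 1 = hi := by ring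
    rw [h2] at h1
    have h3 : b / p 1 ≤ pos' hi := le_trans (le_max_right _ _) (pos'_self_le hi)
    have h4 : p 1 * (b / p 1) ≤ p 1 * pos' hi := mul_le_mul_of_nonneg_left h3 hp1.le
    rw [mul_div_cancel₀ _ hp1.ne'] at h4
    linarith
  have hmhi : m ≤ hi := le_max_left _ _
  obtain ⟨x, _, hx⟩ := intermediate_value_Icc hmhi ((continuous_hfun S).continuousOn)
    ⟨by rw [hm0]; exact hb.le, hble⟩
  exact ⟨x, hx⟩

lemma rootF_spec (hN : 1 ≤ N) (hp : ∀ j ∈ Finset.Icc 1 N, 0 < p j) (S : ℕ → ℝ) {b : ℝ}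
    (hb : 0 < b) : hfun N p S (rootF N p S b) = b := by
  rw [rootF, dif_pos (root_exists hN hp S hb)]
  exact (root_exists hN hp S hb).choose_spec

lemma le_root (hN : 1 ≤ N) (hp : ∀ j ∈ Finset.Icc 1 N, 0 < p j) {S : ℕ → ℝ} {x b : ℝ}
    (hb : 0 < b) (h : hfun N p S x ≤ b) : x ≤ rootF N p S b := by
  by_contra hc; push_neg at hc
  have hspec := rootF_spec hN hp S hb
  have h1 : hfun N p S x = b :=
    le_antisymm h (by rw [← hspec]; exact hfun_mono (fun j hj => (hp j hj).le) hc.le)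
  have := hfun_uniq hp hb h1 hspec
  rw [this] at hc; exact lt_irrefl _ hc

lemma root_le (hN : 1 ≤ N) (hp : ∀ j ∈ Finset.Icc 1 N, 0 < p j) {S : ℕ → ℝ} {x b : ℝ}
    (hb : 0 < b) (h : b ≤ hfun N p S x) : rootF N p S b ≤ x := by
  by_contra hc; push_neg at hc
  have hspec := rootF_spec hN hp S hb
  have h1 : hfun N p S x = b :=
    le_antisymm (by rw [← hspec]; exact hfun_mono (fun j hj => (hp j hj).le) hc.le) h
  have := hfun_uniq hp hb h1 hspec
  rw [this] at hc; exact lt_irrefl _ hc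

lemma root_eq (hN : 1 ≤ N) (hp : ∀ j ∈ Finset.Icc 1 N, 0 < p j) {S : ℕ → ℝ} {x b : ℝ}
    (hb : 0 < b) (h : hfun N p S x = b) : rootF N p S b = x :=
  le_antisymm (root_le hN hp hb h.ge) (le_root hN hp hb h.le)


lemma mem_Icc1_cases {j : ℕ} (hj : j ∈ Finset.Icc 1 N) : j = 1 ∨ j ∈ Finset.Icc 2 N := by
  simp only [Finset.mem_Icc] at hj ⊢; omega

lemma Icc2_subset : Finset.Icc 2 N ⊆ Finset.Icc 1 N := Finset.Icc_subset_Icc (by omega) le_rfl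

lemma hfun_anti_vec (hp : ∀ j ∈ Finset.Icc 1 N, 0 ≤ p j) {S T : ℕ → ℝ} (h1 : S 1 = T 1)
    (hST : ∀ j ∈ Finset.Icc 2 N, S j ≤ T j) (y : ℝ) : hfun N p T y ≤ hfun N p S y := by
  apply hfun_le hp
  intro j hj
  rcases mem_Icc1_cases hj with h | h
  · subst h; linarith [h1.le, h1.ge]
  · have := hST j h; linarith [h1.le, h1.ge]

lemma root_mono_vec (hN : 1 ≤ N) (hp : ∀ j ∈ Finset.Icc 1 N, 0 < p j) {S T : ℕ → ℝ} {b : ℝ}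
    (hb : 0 < b) (h1 : S 1 = T 1) (hST : ∀ j ∈ Finset.Icc 2 N, S j ≤ T j) :
    rootF N p S b ≤ rootF N p T b := by
  apply le_root hN hp hb
  calc hfun N p T (rootF N p S b) ≤ hfun N p S (rootF N p S b) :=
        hfun_anti_vec (fun j hj => (hp j hj).le) h1 hST _
    _ = b := rootF_spec hN hp S hb

/-- Inner system: the equations for indices `2..N`, with `S 1 = σ`. -/
def InnerSol (N : ℕ) (a p : ℕ → ℝ) (σ : ℝ) (S : ℕ → ℝ) : Prop :=
  S 1 = σ ∧ ∀ i ∈ Finset.Icc 2 N, a i = hfun N p S (S i)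

/-- One step of the Jacobi-type iteration. -/
def updF (N : ℕ) (a p : ℕ → ℝ) (S : ℕ → ℝ) : ℕ → ℝ :=
  fun i => if 2 ≤ i ∧ i ≤ N then rootF N p S (a i) else S i

lemma updF_one (a : ℕ → ℝ) (S : ℕ → ℝ) : updF N a p S 1 = S 1 := by
  simp [updF]

lemma updF_mem (a : ℕ → ℝ) (S : ℕ → ℝ) {i : ℕ} (hi : i ∈ Finset.Icc 2 N) :
    updF N a p S i = rootF N p S (a i) := by
  rw [Finset.mem_Icc] at hi
  simp [updF, hi.1, hi.2]

lemma exist_inner {a : ℕ → ℝ} (hN : 1 ≤ N) (hp : ∀ j ∈ Finset.Icc 1 N, 0 < p j)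
    (ha : ∀ i ∈ Finset.Icc 2 N, 0 < a i) {σ : ℝ} (v w : ℕ → ℝ)
    (hv1 : v 1 = σ) (hw1 : w 1 = σ) (hvw : ∀ i ∈ Finset.Icc 2 N, v i ≤ w i)
    (hsub : ∀ i ∈ Finset.Icc 2 N, hfun N p v (v i) ≤ a i)
    (hsup : ∀ i ∈ Finset.Icc 2 N, a i ≤ hfun N p w (w i)) :
    ∃ S : ℕ → ℝ, InnerSol N a p σ S ∧ ∀ i ∈ Finset.Icc 2 N, v i ≤ S i ∧ S i ≤ w i := by
  have hp' : ∀ j ∈ Finset.Icc 1 N, 0 ≤ p j := fun j hj => (hp j hj).le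
  set x : ℕ → ℕ → ℝ := fun k => (updF N a p)^[k] v with hxdef
  have hxsucc : ∀ k, x (k + 1) = updF N a p (x k) := fun k =>
    Function.iterate_succ_apply' _ _ _
  have hx0 : x 0 = v := rfl
  have hx1 : ∀ k, x k 1 = σ := by
    intro k; induction k with
    | zero => exact hv1
    | succ k ih => rw [hxsucc, updF_one]; exact ih
  have key : ∀ k, ∀ i ∈ Finset.Icc 2 N, v i ≤ x k i ∧ x k i ≤ w i ∧ x k i ≤ x (k + 1) i := by
    intro k; induction k with
    | zero =>
      intro i hi
      refine ⟨le_rfl, hvw i hi, ?_⟩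
      rw [hxsucc 0, hx0, updF_mem a v hi]
      exact le_root hN hp (ha i hi) (hsub i hi)
    | succ k ih =>
      intro i hi
      have e1 : x (k + 1) i = rootF N p (x k) (a i) := by
        rw [hxsucc k, updF_mem a _ hi]
      have e2 : x (k + 1 + 1) i = rootF N p (x (k + 1)) (a i) := by
        rw [hxsucc (k + 1), updF_mem a _ hi]
      have hw' : x (k + 1) i ≤ w i := by
        rw [e1]
        calc rootF N p (x k) (a i) ≤ rootF N p w (a i) :=
              root_mono_vec hN hp (ha i hi) (by rw [hx1 k, hw1]) (fun j hj => (ih j hj).2.1)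
          _ ≤ w i := root_le hN hp (ha i hi) (hsup i hi)
      refine ⟨(ih i hi).1.trans (ih i hi).2.2, hw', ?_⟩
      rw [e1, e2]
      exact root_mono_vec hN hp (ha i hi) (by rw [hx1 k, hx1 (k + 1)])
        (fun j hj => (ih j hj).2.2)
  have hmono : ∀ i ∈ Finset.Icc 2 N, Monotone fun k => x k i := fun i hi =>
    monotone_nat_of_le_succ fun k => (key k i hi).2.2
  have hbdd : ∀ i ∈ Finset.Icc 2 N, BddAbove (Set.range fun k => x k i) := fun i hi =>
    ⟨w i, by rintro y ⟨k, rfl⟩; exact (key k i hi).2.1⟩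
  set S : ℕ → ℝ := fun i =>
    if i ∈ Finset.Icc 2 N then ⨆ k, x k i else if i = 1 then σ else 0 with hSdef
  have hS1 : S 1 = σ := by
    have h1 : (1 : ℕ) ∉ Finset.Icc 2 N := by simp
    simp [hSdef, h1]
  have hSi : ∀ i ∈ Finset.Icc 2 N, S i = ⨆ k, x k i := fun i hi => by
    simp only [hSdef]; rw [if_pos hi]
  have htends : ∀ j ∈ Finset.Icc 1 N,
      Filter.Tendsto (fun k => x k j) Filter.atTop (nhds (S j)) := by
    intro j hj
    rcases mem_Icc1_cases hj with h | h
    · subst h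
      have : (fun k => x k 1) = fun _ => σ := funext hx1
      rw [this, hS1]; exact tendsto_const_nhds
    · rw [hSi j h]; exact tendsto_atTop_ciSup (hmono j h) (hbdd j h)
  have heq : ∀ i ∈ Finset.Icc 2 N, a i = hfun N p S (S i) := by
    intro i hi
    have hk : ∀ k, hfun N p (x k) (x (k + 1) i) = a i := fun k => by
      rw [hxsucc, updF_mem a _ hi]; exact rootF_spec hN hp _ (ha i hi)
    have ht2 : Filter.Tendsto (fun k => x (k + 1) i) Filter.atTop (nhds (S i)) :=
      (htends i (Icc2_subset hi)).comp (tendsto_add_atTop_nat 1)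
    have hT := hfun_tendsto (p := p) hN (Sk := x) (xk := fun k => x (k + 1) i) htends ht2
    have hT' : Filter.Tendsto (fun _ : ℕ => a i) Filter.atTop (nhds (hfun N p S (S i))) := by
      have : (fun k => hfun N p (x k) (x (k + 1) i)) = fun _ => a i := funext hk
      rwa [this] at hT
    exact tendsto_nhds_unique tendsto_const_nhds hT'
  refine ⟨S, ⟨hS1, heq⟩, fun i hi => ?_⟩
  rw [hSi i hi]
  constructor
  · have := le_ciSup (hbdd i hi) 0
    rwa [show x 0 i = v i from rfl] at this
  · exact ciSup_le fun k => (key k i hi).2.1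


lemma a_lt (hstep : ∀ i, 1 ≤ i → i < N → a i < a (i + 1)) {i j : ℕ}
    (h1 : 1 ≤ i) (hij : i < j) (hjN : j ≤ N) : a i < a j := by
  induction j with
  | zero => omega
  | succ j ih =>
    by_cases hij' : i < j
    · have h1' := ih hij' (by omega)
      have h2 := hstep j (by omega) (by omega)
      linarith
    · have : i = j := by omega
      subst this
      exact hstep i h1 (by omega)

lemma a_le (hstep : ∀ i, 1 ≤ i → i < N → a i < a (i + 1)) {i j : ℕ}
    (h1 : 1 ≤ i) (hij : i ≤ j) (hjN : j ≤ N) : a i ≤ a j := by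
  rcases eq_or_lt_of_le hij with h | h
  · subst h; exact le_rfl
  · exact (a_lt hstep h1 h hjN).le

lemma a_pos (ha1 : 0 < a 1) (hstep : ∀ i, 1 ≤ i → i < N → a i < a (i + 1)) {i : ℕ}
    (h1 : 1 ≤ i) (hiN : i ≤ N) : 0 < a i :=
  lt_of_lt_of_le ha1 (a_le hstep le_rfl h1 hiN)

lemma comp_lemma (hp : ∀ j ∈ Finset.Icc 1 N, 0 < p j) {σ σ' : ℝ} {S S' : ℕ → ℝ}
    (hσ' : 0 < σ') (hlt : σ < σ')
    (hI : InnerSol N a p σ S) (hI' : InnerSol N a p σ' S') :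
    ∀ i ∈ Finset.Icc 2 N, S' i ≤ S i := by
  by_contra hc; push_neg at hc
  obtain ⟨i0, hi0, hlt0⟩ := hc
  obtain ⟨im, him, hmax⟩ :=
    Finset.exists_max_image (Finset.Icc 2 N) (fun j => S' j - S j) ⟨i0, hi0⟩
  have hl : 0 < S' im - S im := lt_of_lt_of_le (by linarith) (hmax i0 hi0)
  have e1 : a im = hfun N p S (S im) := hI.2 im him
  have e2 : a im = hfun N p S' (S' im) := hI'.2 im him
  have hS1 : S 1 = σ := hI.1
  have hS1' : S' 1 = σ' := hI'.1
  have hmain : hfun N p S (S im) < hfun N p S' (S' im) := by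
    apply hfun_lt hp (j0 := im) (Icc2_subset him)
    · intro j hj
      rcases mem_Icc1_cases hj with h | h
      · subst h; linarith
      · have := hmax j h; linarith
    · linarith
    · linarith
  rw [← e1, ← e2] at hmain
  exact lt_irrefl _ hmain

lemma pos_of_g_le (hp : ∀ j ∈ Finset.Icc 1 N, 0 < p j)
    (hstep : ∀ i, 1 ≤ i → i < N → a i < a (i + 1)) {σ : ℝ} {S : ℕ → ℝ}
    (hσ : 0 < σ) (hI : InnerSol N a p σ S) (hg : hfun N p S (S 1) ≤ a 1) :
    ∀ i ∈ Finset.Icc 2 N, 0 < S i := by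
  by_contra hc; push_neg at hc
  obtain ⟨i1, hi1, h⟩ := hc
  obtain ⟨i0, hi0, hmin⟩ := Finset.exists_min_image (Finset.Icc 2 N) S ⟨i1, hi1⟩
  have hm : S i0 ≤ 0 := (hmin i1 hi1).trans h
  have hS1 : S 1 = σ := hI.1
  have h1 : a i0 = hfun N p S (S i0) := hI.2 i0 hi0
  have h2 : hfun N p S (S i0) < hfun N p S (S 1) := by
    apply hfun_lt hp (j0 := i0) (Icc2_subset hi0)
    · intro j hj; linarith
    · linarith
    · linarith
  have hmem : 2 ≤ i0 ∧ i0 ≤ N := Finset.mem_Icc.mp hi0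
  have h3 : a 1 < a i0 := a_lt hstep le_rfl (by omega) hmem.2
  linarith


lemma Q_pos (hN : 1 ≤ N) (hp : ∀ j ∈ Finset.Icc 1 N, 0 < p j) :
    0 < ∑ j ∈ Finset.Icc 1 N, p j :=
  Finset.sum_pos hp ⟨1, mem1N hN⟩

lemma p1_le_Q (hN : 1 ≤ N) (hp : ∀ j ∈ Finset.Icc 1 N, 0 < p j) :
    p 1 ≤ ∑ j ∈ Finset.Icc 1 N, p j :=
  Finset.single_le_sum (f := p) (fun j hj => (hp j hj).le) (mem1N hN)

lemma psum2_le_Q (hp : ∀ j ∈ Finset.Icc 1 N, 0 < p j) :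
    ∑ j ∈ Finset.Icc 2 N, p j ≤ ∑ j ∈ Finset.Icc 1 N, p j :=
  Finset.sum_le_sum_of_subset_of_nonneg Icc2_subset (fun j hj _ => (hp j hj).le)

lemma init_mem (hN : 1 ≤ N) (hp : ∀ j ∈ Finset.Icc 1 N, 0 < p j) (ha1 : 0 < a 1)
    (hstep : ∀ i, 1 ≤ i → i < N → a i < a (i + 1)) :
    ∃ S : ℕ → ℝ, InnerSol N a p (a 1 / (4 * ∑ j ∈ Finset.Icc 1 N, p j)) S ∧
      hfun N p S (S 1) < a 1 := by
  set Q : ℝ := ∑ j ∈ Finset.Icc 1 N, p j with hQdef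
  have hQ : 0 < Q := Q_pos hN hp
  set σ1 : ℝ := a 1 / (4 * Q) with hσ1def
  have hσ1 : 0 < σ1 := div_pos ha1 (by positivity)
  have ha2 : ∀ i ∈ Finset.Icc 2 N, 0 < a i := fun i hi => by
    have h := Finset.mem_Icc.mp hi
    exact a_pos ha1 hstep (by omega) h.2
  have hp1 : 0 < p 1 := hp 1 (mem1N hN)
  have haN : 0 < a N := a_pos ha1 hstep hN le_rfl
  set M : ℝ := a N / p 1 with hMdef
  have hM : 0 < M := div_pos haN hp1
  set v : ℕ → ℝ := fun i => if i = 1 then σ1 else 0 with hvdef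
  set w : ℕ → ℝ := fun i => if i = 1 then σ1 else M with hwdef
  have hv1 : v 1 = σ1 := if_pos rfl
  have hw1 : w 1 = σ1 := if_pos rfl
  have hne1 : ∀ i ∈ Finset.Icc 2 N, i ≠ 1 := fun i hi => by
    have := Finset.mem_Icc.mp hi; omega
  have hQσ : Q * σ1 = a 1 / 4 := by
    rw [hσ1def]; field_simp
  obtain ⟨S, hIS, hbound⟩ := exist_inner hN hp ha2 v w hv1 hw1
    (fun i hi => by rw [hvdef, hwdef]; simp only [if_neg (hne1 i hi)]; exact hM.le)
    (fun i hi => by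
      -- subsolution
      have hvi : v i = 0 := if_neg (hne1 i hi)
      rw [hvi]
      have hb : hfun N p v 0 ≤ Q * σ1 := by
        rw [hfun, hQdef, Finset.sum_mul]
        apply Finset.sum_le_sum
        intro j hj
        have hterm : pos' (0 - v j + v 1) ≤ σ1 := by
          rcases mem_Icc1_cases hj with h | h
          · subst h
            have : (0 : ℝ) - v 1 + v 1 = 0 := by ring
            rw [this, pos'_of_nonneg le_rfl]; exact hσ1.le
          · have hvj : v j = 0 := if_neg (hne1 j h)
            have : (0 : ℝ) - v j + v 1 = σ1 := by rw [hvj, hv1]; ring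
            rw [this, pos'_of_nonneg hσ1.le]
        exact mul_le_mul_of_nonneg_left hterm (hp j hj).le
      have hlt : a 1 < a i := by
        have := Finset.mem_Icc.mp hi
        exact a_lt hstep le_rfl (by omega) this.2
      calc hfun N p v 0 ≤ Q * σ1 := hb
        _ = a 1 / 4 := hQσ
        _ ≤ a i := by linarith)
    (fun i hi => by
      -- supersolution
      have hwi : w i = M := if_neg (hne1 i hi)
      rw [hwi]
      have h1 : p 1 * pos' (M - w 1 + w 1) ≤ hfun N p w M :=
        single_le_hfun (fun j hj => (hp j hj).le) (mem1N hN)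
      have h2 : M - w 1 + w 1 = M := by ring
      rw [h2, pos'_of_nonneg hM.le] at h1
      have h3 : p 1 * M = a N := by rw [hMdef]; field_simp
      have h4 : a i ≤ a N := by
        have := Finset.mem_Icc.mp hi
        exact a_le hstep (by omega) this.2 le_rfl
      linarith)
  refine ⟨S, hIS, ?_⟩
  -- bound the value of the first equation
  have hg : hfun N p S (S 1) ≤ Q * (2 * σ1) := by
    rw [hfun, hQdef, Finset.sum_mul]
    apply Finset.sum_le_sum
    intro j hj
    have hterm : pos' (S 1 - S j + S 1) ≤ 2 * σ1 := by
      have hS1 : S 1 = σ1 := hIS.1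
      rcases mem_Icc1_cases hj with h | h
      · subst h
        have : S 1 - S 1 + S 1 = σ1 := by rw [hS1]; ring
        rw [this, pos'_of_nonneg hσ1.le]; linarith
      · have hSj : 0 ≤ S j := by
          have := (hbound j h).1
          have hvj : v j = 0 := if_neg (hne1 j h)
          rw [hvj] at this; exact this
        have harg : S 1 - S j + S 1 ≤ 2 * σ1 := by rw [hS1]; linarith
        calc pos' (S 1 - S j + S 1) ≤ pos' (2 * σ1) := pos'_mono harg
          _ = 2 * σ1 := pos'_of_nonneg (by linarith)
    exact mul_le_mul_of_nonneg_left hterm (hp j hj).le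
  have : Q * (2 * σ1) = a 1 / 2 := by rw [hσ1def]; field_simp; ring
  linarith


lemma extend_lemma (hN : 1 ≤ N) (hp : ∀ j ∈ Finset.Icc 1 N, 0 < p j) (ha1 : 0 < a 1)
    (hstep : ∀ i, 1 ≤ i → i < N → a i < a (i + 1)) {σ : ℝ} {S : ℕ → ℝ} (hσ : 0 < σ)
    (hI : InnerSol N a p σ S) (hg : hfun N p S (S 1) < a 1) :
    ∃ σ' S', σ < σ' ∧ InnerSol N a p σ' S' ∧ hfun N p S' (S' 1) < a 1 := by
  set Q : ℝ := ∑ j ∈ Finset.Icc 1 N, p j with hQdef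
  have hQ : 0 < Q := Q_pos hN hp
  have hp1 : 0 < p 1 := hp 1 (mem1N hN)
  have hp1Q : p 1 ≤ Q := p1_le_Q hN hp
  set η : ℝ := a 1 - hfun N p S (S 1) with hηdef
  have hη : 0 < η := by rw [hηdef]; linarith
  have hpos : ∀ i ∈ Finset.Icc 2 N, 0 < S i := pos_of_g_le hp hstep hσ hI hg.le
  have ha2 : ∀ i ∈ Finset.Icc 2 N, 0 < a i := fun i hi => by
    have h := Finset.mem_Icc.mp hi
    exact a_pos ha1 hstep (by omega) h.2
  have hne1 : ∀ i ∈ Finset.Icc 2 N, i ≠ 1 := fun i hi => by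
    have := Finset.mem_Icc.mp hi; omega
  -- a positive lower bound for the coordinates of S
  obtain ⟨d, hd_le, hd_pos⟩ : ∃ d : ℝ, (∀ i ∈ Finset.Icc 2 N, d ≤ S i) ∧ 0 < d := by
    refine ⟨(insert (1 : ℝ) ((Finset.Icc 2 N).image S)).min' ⟨1, Finset.mem_insert_self _ _⟩,
      fun i hi => Finset.min'_le _ _ (Finset.mem_insert_of_mem (Finset.mem_image_of_mem S hi)),
      ?_⟩
    have hmem := Finset.min'_mem (insert (1 : ℝ) ((Finset.Icc 2 N).image S))
      ⟨1, Finset.mem_insert_self _ _⟩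
    rcases Finset.mem_insert.mp hmem with h | h
    · rw [h]; norm_num
    · obtain ⟨i, hi, heq⟩ := Finset.mem_image.mp h
      rw [← heq]; exact hpos i hi
  set δ' : ℝ := min d (η / (4 * Q)) with hδ'def
  have hδ' : 0 < δ' := lt_min hd_pos (by positivity)
  set ε : ℝ := min (p 1 * δ' / Q) (η / (8 * Q)) with hεdef
  have hε : 0 < ε := lt_min (by positivity) (by positivity)
  have hQδ' : Q * δ' ≤ η / 4 := by
    have h := min_le_right d (η / (4 * Q))
    calc Q * δ' ≤ Q * (η / (4 * Q)) := mul_le_mul_of_nonneg_left h hQ.le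
      _ = η / 4 := by field_simp
  have hQε1 : Q * ε ≤ p 1 * δ' := by
    have h := min_le_left (p 1 * δ' / Q) (η / (8 * Q))
    calc Q * ε ≤ Q * (p 1 * δ' / Q) := mul_le_mul_of_nonneg_left h hQ.le
      _ = p 1 * δ' := by field_simp
  have hQε2 : Q * ε ≤ η / 8 := by
    have h := min_le_right (p 1 * δ' / Q) (η / (8 * Q))
    calc Q * ε ≤ Q * (η / (8 * Q)) := mul_le_mul_of_nonneg_left h hQ.le
      _ = η / 8 := by field_simp
  set σ' : ℝ := σ + ε with hσ'def
  set v : ℕ → ℝ := fun i => if i = 1 then σ' else S i - δ' with hvdef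
  set w : ℕ → ℝ := fun i => if i = 1 then σ' else S i with hwdef
  have hv1 : v 1 = σ' := if_pos rfl
  have hw1 : w 1 = σ' := if_pos rfl
  have ea : ∀ i ∈ Finset.Icc 2 N, a i =
      p 1 * pos' (S i) + ∑ j ∈ Finset.Icc 2 N, p j * pos' (S i - S j + σ) := by
    intro i hi
    rw [hI.2 i hi, hfun_expand hN, hI.1]
  have hsub : ∀ i ∈ Finset.Icc 2 N, hfun N p v (v i) ≤ a i := by
    intro i hi
    have hvi : v i = S i - δ' := if_neg (hne1 i hi)
    have hdi : δ' ≤ S i := le_trans (min_le_left _ _) (hd_le i hi)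
    have e : hfun N p v (v i) = p 1 * pos' (S i - δ') +
        ∑ j ∈ Finset.Icc 2 N, p j * pos' ((S i - S j + σ) + ε) := by
      rw [hfun_expand hN, hvi]
      congr 1
      apply Finset.sum_congr rfl
      intro j hj
      have hvj : v j = S j - δ' := if_neg (hne1 j hj)
      have harg : S i - δ' - v j + v 1 = (S i - S j + σ) + ε := by
        rw [hvj, hv1, hσ'def]; ring
      rw [harg]
    have hsums : ∑ j ∈ Finset.Icc 2 N, p j * pos' ((S i - S j + σ) + ε) ≤
        (∑ j ∈ Finset.Icc 2 N, p j * pos' (S i - S j + σ)) + Q * ε := by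
      have h1 : ∀ j ∈ Finset.Icc 2 N, p j * pos' ((S i - S j + σ) + ε) ≤
          p j * pos' (S i - S j + σ) + p j * ε := by
        intro j hj
        have h2 := pos'_add_le (x := S i - S j + σ) hε.le
        have h3 := (hp j (Icc2_subset hj)).le
        calc p j * pos' ((S i - S j + σ) + ε) ≤ p j * (pos' (S i - S j + σ) + ε) :=
              mul_le_mul_of_nonneg_left h2 h3
          _ = p j * pos' (S i - S j + σ) + p j * ε := mul_add _ _ _
      calc ∑ j ∈ Finset.Icc 2 N, p j * pos' ((S i - S j + σ) + ε)
          ≤ ∑ j ∈ Finset.Icc 2 N, (p j * pos' (S i - S j + σ) + p j * ε) :=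
            Finset.sum_le_sum h1
        _ = (∑ j ∈ Finset.Icc 2 N, p j * pos' (S i - S j + σ)) +
            ∑ j ∈ Finset.Icc 2 N, p j * ε := Finset.sum_add_distrib
        _ ≤ _ := by
            have h4 : ∑ j ∈ Finset.Icc 2 N, p j * ε = (∑ j ∈ Finset.Icc 2 N, p j) * ε :=
              (Finset.sum_mul _ _ _).symm
            have h5 := psum2_le_Q (N := N) hp
            have h6 := mul_le_mul_of_nonneg_right h5 hε.le
            linarith
    have hposSi := hpos i hi
    have eai := ea i hi
    rw [pos'_of_nonneg hposSi.le] at eai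
    rw [e, pos'_of_nonneg (by linarith : (0:ℝ) ≤ S i - δ')]
    linarith
  have hsup : ∀ i ∈ Finset.Icc 2 N, a i ≤ hfun N p w (w i) := by
    intro i hi
    have hwi : w i = S i := if_neg (hne1 i hi)
    have e : hfun N p w (w i) = p 1 * pos' (S i) +
        ∑ j ∈ Finset.Icc 2 N, p j * pos' ((S i - S j + σ) + ε) := by
      rw [hfun_expand hN, hwi]
      congr 1
      apply Finset.sum_congr rfl
      intro j hj
      have hwj : w j = S j := if_neg (hne1 j hj)
      have harg : S i - w j + w 1 = (S i - S j + σ) + ε := by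
        rw [hwj, hw1, hσ'def]; ring
      rw [harg]
    have h1 : ∀ j ∈ Finset.Icc 2 N, p j * pos' (S i - S j + σ) ≤
        p j * pos' ((S i - S j + σ) + ε) := fun j hj =>
      mul_le_mul_of_nonneg_left (pos'_mono (by linarith)) (hp j (Icc2_subset hj)).le
    have h2 := Finset.sum_le_sum h1
    have eai := ea i hi
    rw [e]; linarith
  obtain ⟨S', hI', hbnd⟩ := exist_inner hN hp ha2 v w hv1 hw1
    (fun i hi => by
      have hvi : v i = S i - δ' := if_neg (hne1 i hi)
      have hwi : w i = S i := if_neg (hne1 i hi)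
      rw [hvi, hwi]; linarith)
    hsub hsup
  refine ⟨σ', S', by rw [hσ'def]; linarith, hI', ?_⟩
  -- final bound on the value of the first equation at σ'
  have hS'1 : S' 1 = σ' := hI'.1
  have e' : hfun N p S' (S' 1) = p 1 * pos' σ' +
      ∑ j ∈ Finset.Icc 2 N, p j * pos' (σ' - S' j + σ') := by
    rw [hfun_expand hN, hS'1]
  have eg : hfun N p S (S 1) = p 1 * pos' σ +
      ∑ j ∈ Finset.Icc 2 N, p j * pos' (σ - S j + σ) := by
    rw [hfun_expand hN, hI.1]
  have hterm : ∀ j ∈ Finset.Icc 2 N, p j * pos' (σ' - S' j + σ') ≤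
      p j * pos' (σ - S j + σ) + p j * (2 * ε + δ') := by
    intro j hj
    have hb1 : S j - δ' ≤ S' j := by
      have := (hbnd j hj).1
      rwa [show v j = S j - δ' from if_neg (hne1 j hj)] at this
    have harg : σ' - S' j + σ' ≤ (σ - S j + σ) + (2 * ε + δ') := by
      rw [hσ'def]; linarith
    have hpj := (hp j (Icc2_subset hj)).le
    calc p j * pos' (σ' - S' j + σ')
        ≤ p j * pos' ((σ - S j + σ) + (2 * ε + δ')) :=
          mul_le_mul_of_nonneg_left (pos'_mono harg) hpj
      _ ≤ p j * (pos' (σ - S j + σ) + (2 * ε + δ')) :=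
          mul_le_mul_of_nonneg_left (pos'_add_le (by linarith)) hpj
      _ = p j * pos' (σ - S j + σ) + p j * (2 * ε + δ') := mul_add _ _ _
  have hsum2 : ∑ j ∈ Finset.Icc 2 N, p j * pos' (σ' - S' j + σ') ≤
      (∑ j ∈ Finset.Icc 2 N, p j * pos' (σ - S j + σ)) + Q * (2 * ε + δ') := by
    calc ∑ j ∈ Finset.Icc 2 N, p j * pos' (σ' - S' j + σ')
        ≤ ∑ j ∈ Finset.Icc 2 N, (p j * pos' (σ - S j + σ) + p j * (2 * ε + δ')) :=
          Finset.sum_le_sum hterm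
      _ = (∑ j ∈ Finset.Icc 2 N, p j * pos' (σ - S j + σ)) +
          ∑ j ∈ Finset.Icc 2 N, p j * (2 * ε + δ') := Finset.sum_add_distrib
      _ ≤ _ := by
          have h4 : ∑ j ∈ Finset.Icc 2 N, p j * (2 * ε + δ') =
              (∑ j ∈ Finset.Icc 2 N, p j) * (2 * ε + δ') := (Finset.sum_mul _ _ _).symm
          have h5 := psum2_le_Q (N := N) hp
          have h6 := mul_le_mul_of_nonneg_right h5 (by linarith [hε.le, hδ'.le] :
            (0:ℝ) ≤ 2 * ε + δ')
          linarith
  have hposσ' : (0:ℝ) ≤ σ' := by rw [hσ'def]; linarith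
  have hp1ε : p 1 * ε ≤ Q * ε := mul_le_mul_of_nonneg_right hp1Q hε.le
  have hη2 : a 1 = p 1 * σ + (∑ j ∈ Finset.Icc 2 N, p j * pos' (σ - S j + σ)) + η := by
    rw [hηdef, eg, pos'_of_nonneg hσ.le]; ring
  have hident : Q * (2 * ε + δ') = 2 * (Q * ε) + Q * δ' := by ring
  have hps : p 1 * σ' = p 1 * σ + p 1 * ε := by rw [hσ'def]; ring
  rw [e', pos'_of_nonneg hposσ']
  linarith [hsum2, hQδ', hQε2, hp1ε, hη2, hident, hps, hη]


lemma hfun_eq_sum (S : ℕ → ℝ) (x : ℝ) :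
    hfun N p S x = ∑ j ∈ Finset.Icc 1 N, p j * pos' (x - S j + S 1) := rfl

theorem exists_stationary (hN : 1 ≤ N) (hp : ∀ j ∈ Finset.Icc 1 N, 0 < p j) (ha1 : 0 < a 1)
    (hstep : ∀ i, 1 ≤ i → i < N → a i < a (i + 1)) :
    ∃ s : ℕ → ℝ, IsStationaryTuple N a p s := by
  have hp1 : 0 < p 1 := hp 1 (mem1N hN)
  have hQ : 0 < ∑ j ∈ Finset.Icc 1 N, p j := Q_pos hN hp
  set σ1 : ℝ := a 1 / (4 * ∑ j ∈ Finset.Icc 1 N, p j) with hσ1def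
  have hσ1pos : 0 < σ1 := div_pos ha1 (by positivity)
  set A : Set ℝ :=
    {σ : ℝ | 0 < σ ∧ ∃ S : ℕ → ℝ, InnerSol N a p σ S ∧ hfun N p S (S 1) < a 1} with hAdef
  have hσ1A : σ1 ∈ A := ⟨hσ1pos, init_mem hN hp ha1 hstep⟩
  have hbdd : BddAbove A := by
    refine ⟨a 1 / p 1, fun σ hσ => ?_⟩
    obtain ⟨hσpos, S, hIS, hg⟩ := hσ
    have h1 : p 1 * pos' (S 1 - S 1 + S 1) ≤ hfun N p S (S 1) :=
      single_le_hfun (fun j hj => (hp j hj).le) (mem1N hN)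
    have h2 : S 1 - S 1 + S 1 = σ := by rw [hIS.1]; ring
    rw [h2, pos'_of_nonneg hσpos.le] at h1
    rw [le_div_iff₀ hp1]
    nlinarith
  set σstar : ℝ := sSup A with hσstardef
  have hσ1le : σ1 ≤ σstar := le_csSup hbdd hσ1A
  have hσstarpos : 0 < σstar := lt_of_lt_of_le hσ1pos hσ1le
  have hnotmem : σstar ∉ A := by
    intro hmem
    obtain ⟨hposσ, S, hIS, hg⟩ := hmem
    obtain ⟨σ'', S'', hlt, hI'', hg''⟩ := extend_lemma hN hp ha1 hstep hposσ hIS hg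
    have hmem'' : σ'' ∈ A := ⟨by linarith, S'', hI'', hg''⟩
    have h3 : σ'' ≤ σstar := le_csSup hbdd hmem''
    linarith
  -- construct a strictly increasing sequence in A converging to σstar
  have hAne : A.Nonempty := ⟨σ1, hσ1A⟩
  have hchoice : ∀ x : ℝ, x < σstar → ∀ k : ℕ,
      ∃ y, y ∈ A ∧ y < σstar ∧ x < y ∧ σstar - 1 / ((k : ℝ) + 1) < y := by
    intro x hx k
    have hlt : max x (σstar - 1 / ((k : ℝ) + 1)) < σstar :=
      max_lt hx (sub_lt_self _ (by positivity))
    obtain ⟨y, hyA, hy⟩ := exists_lt_of_lt_csSup hAne hlt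
    have hyle : y ≤ σstar := le_csSup hbdd hyA
    have hyne : y ≠ σstar := fun h => hnotmem (h ▸ hyA)
    exact ⟨y, hyA, lt_of_le_of_ne hyle hyne, (le_max_left _ _).trans_lt hy,
      (le_max_right _ _).trans_lt hy⟩
  have hσ1lt : σ1 < σstar := lt_of_le_of_ne hσ1le (fun h => hnotmem (h ▸ hσ1A))
  let f : ℕ → {x : ℝ // x ∈ A ∧ x < σstar} := fun k =>
    Nat.rec ⟨σ1, hσ1A, hσ1lt⟩
      (fun k prev =>
        ⟨(hchoice prev.1 prev.2.2 k).choose, (hchoice prev.1 prev.2.2 k).choose_spec.1,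
          (hchoice prev.1 prev.2.2 k).choose_spec.2.1⟩) k
  set σs : ℕ → ℝ := fun k => (f k).1 with hσsdef
  have hmemA : ∀ k, σs k ∈ A := fun k => (f k).2.1
  have hltstar : ∀ k, σs k < σstar := fun k => (f k).2.2
  have hprop : ∀ k, σs k < σs (k + 1) ∧ σstar - 1 / ((k : ℝ) + 1) < σs (k + 1) := by
    intro k
    have h := (hchoice (σs k) (f k).2.2 k).choose_spec
    exact ⟨h.2.2.1, h.2.2.2⟩
  have hmonoσ : StrictMono σs := strictMono_nat_of_lt_succ fun k => (hprop k).1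
  have htendσ : Filter.Tendsto σs Filter.atTop (nhds σstar) := by
    rw [← Filter.tendsto_add_atTop_iff_nat 1]
    have hlow : Filter.Tendsto (fun k : ℕ => σstar - 1 / ((k : ℝ) + 1)) Filter.atTop
        (nhds σstar) := by
      have := tendsto_const_nhds (x := σstar) (f := Filter.atTop (α := ℕ))
      have h0 : Filter.Tendsto (fun n : ℕ => 1 / ((n : ℝ) + 1)) Filter.atTop (nhds 0) :=
        tendsto_one_div_add_atTop_nhds_zero_nat
      have := this.sub h0
      simpa using this
    exact tendsto_of_tendsto_of_tendsto_of_le_of_le hlow tendsto_const_nhds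
      (fun k => (hprop k).2.le) (fun k => (hltstar (k + 1)).le)
  -- witnesses along the sequence
  have hWex : ∀ k, ∃ S : ℕ → ℝ, InnerSol N a p (σs k) S ∧ hfun N p S (S 1) < a 1 := fun k =>
    (hmemA k).2
  set W : ℕ → ℕ → ℝ := fun k => (hWex k).choose with hWdef
  have hWI : ∀ k, InnerSol N a p (σs k) (W k) := fun k => (hWex k).choose_spec.1
  have hWg : ∀ k, hfun N p (W k) (W k 1) < a 1 := fun k => (hWex k).choose_spec.2
  have hWpos : ∀ k, ∀ i ∈ Finset.Icc 2 N, 0 < W k i := fun k =>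
    pos_of_g_le hp hstep (hmemA k).1 (hWI k) (hWg k).le
  have hanti : ∀ k, ∀ i ∈ Finset.Icc 2 N, W (k + 1) i ≤ W k i := fun k =>
    comp_lemma hp (hmemA (k + 1)).1 (hprop k).1 (hWI k) (hWI (k + 1))
  set Sbar : ℕ → ℝ := fun i =>
    if i ∈ Finset.Icc 2 N then ⨅ k, W k i else if i = 1 then σstar else 0 with hSbardef
  have hSbar1 : Sbar 1 = σstar := by
    have h1 : (1 : ℕ) ∉ Finset.Icc 2 N := by simp
    simp only [hSbardef]; rw [if_neg h1]; simp
  have hSbari : ∀ i ∈ Finset.Icc 2 N, Sbar i = ⨅ k, W k i := fun i hi => by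
    simp only [hSbardef]; rw [if_pos hi]
  have htendsW : ∀ j ∈ Finset.Icc 1 N,
      Filter.Tendsto (fun k => W k j) Filter.atTop (nhds (Sbar j)) := by
    intro j hj
    rcases mem_Icc1_cases hj with h | h
    · subst h
      have heq : (fun k => W k 1) = σs := funext fun k => (hWI k).1
      rw [heq, hSbar1]; exact htendσ
    · rw [hSbari j h]
      exact tendsto_atTop_ciInf (antitone_nat_of_succ_le fun k => hanti k j h)
        ⟨0, by rintro y ⟨k, rfl⟩; exact (hWpos k j h).le⟩
  have hIbar : InnerSol N a p σstar Sbar := by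
    refine ⟨hSbar1, fun i hi => ?_⟩
    have hk : ∀ k, hfun N p (W k) (W k i) = a i := fun k => ((hWI k).2 i hi).symm
    have hT := hfun_tendsto (p := p) hN (Sk := W) (xk := fun k => W k i) htendsW
      (htendsW i (Icc2_subset hi))
    have hT' : Filter.Tendsto (fun _ : ℕ => a i) Filter.atTop
        (nhds (hfun N p Sbar (Sbar i))) := by
      have : (fun k => hfun N p (W k) (W k i)) = fun _ => a i := funext hk
      rwa [this] at hT
    exact tendsto_nhds_unique tendsto_const_nhds hT'
  have hgbar : hfun N p Sbar (Sbar 1) ≤ a 1 := by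
    have hT := hfun_tendsto (p := p) hN (Sk := W) (xk := fun k => W k 1) htendsW
      (htendsW 1 (mem1N hN))
    exact le_of_tendsto hT (Filter.Eventually.of_forall fun k => (hWg k).le)
  have hgeq : hfun N p Sbar (Sbar 1) = a 1 := by
    rcases eq_or_lt_of_le hgbar with h | h
    · exact h
    · exfalso
      obtain ⟨σ'', S'', hlt, hI'', hg''⟩ := extend_lemma hN hp ha1 hstep hσstarpos hIbar h
      have hmem'' : σ'' ∈ A := ⟨by linarith, S'', hI'', hg''⟩
      have h3 : σ'' ≤ σstar := le_csSup hbdd hmem''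
      linarith
  -- assemble the stationary tuple
  have heqs : ∀ i, 1 ≤ i → i ≤ N → a i = hfun N p Sbar (Sbar i) := by
    intro i h1 h2
    rcases mem_Icc1_cases (Finset.mem_Icc.mpr ⟨h1, h2⟩) with h | h
    · subst h; exact hgeq.symm
    · exact hIbar.2 i h
  refine ⟨Sbar, ?_, ?_, ?_⟩
  · rw [hSbar1]; exact hσstarpos
  · intro i h1 hiN
    by_contra hc; push_neg at hc
    have e1 := heqs i h1 (by omega)
    have e2 := heqs (i + 1) (by omega) (by omega)
    have hlt : a i < a (i + 1) := hstep i h1 hiN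
    have := hfun_mono (S := Sbar) (fun j hj => (hp j hj).le) hc
    rw [← e1, ← e2] at this
    linarith
  · intro i h1 h2
    rw [heqs i h1 h2, hfun_eq_sum]

lemma unique_aux (hN : 1 ≤ N) (hp : ∀ j ∈ Finset.Icc 1 N, 0 < p j)
    {s s' : ℕ → ℝ} (hs : IsStationaryTuple N a p s) (hs' : IsStationaryTuple N a p s')
    (h1le : s' 1 ≤ s 1) {i0 : ℕ} (hi0 : i0 ∈ Finset.Icc 1 N) (hlt0 : s' i0 < s i0) : False := by
  obtain ⟨im, him, hmax⟩ :=
    Finset.exists_max_image (Finset.Icc 1 N) (fun j => s j - s' j) ⟨i0, hi0⟩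
  have hmm := Finset.mem_Icc.mp him
  have hlam : 0 < s im - s' im := lt_of_lt_of_le (by linarith) (hmax i0 hi0)
  have hs'pos : 0 < s' im := lt_of_lt_of_le hs'.1 (a_le hs'.2.1 le_rfl hmm.1 hmm.2)
  have e1 : a im = hfun N p s (s im) := by
    rw [hfun_eq_sum]; exact hs.2.2 im hmm.1 hmm.2
  have e2 : a im = hfun N p s' (s' im) := by
    rw [hfun_eq_sum]; exact hs'.2.2 im hmm.1 hmm.2
  have hmain : hfun N p s' (s' im) < hfun N p s (s im) := by
    apply hfun_lt hp (j0 := 1) (mem1N hN)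
    · intro j hj
      have := hmax j hj
      linarith
    · linarith
    · linarith
  rw [← e1, ← e2] at hmain
  exact lt_irrefl _ hmain

theorem stationary_unique (hN : 1 ≤ N) (hp : ∀ j ∈ Finset.Icc 1 N, 0 < p j)
    {s s' : ℕ → ℝ} (hs : IsStationaryTuple N a p s) (hs' : IsStationaryTuple N a p s') :
    ∀ i, 1 ≤ i → i ≤ N → s i = s' i := by
  intro i h1 h2
  have h11 : s 1 = s' 1 := by
    by_contra hne
    rcases lt_or_gt_of_ne hne with h | h
    · exact unique_aux hN hp hs' hs h.le (mem1N hN) h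
    · exact unique_aux hN hp hs hs' h.le (mem1N hN) h
  have hi : i ∈ Finset.Icc 1 N := Finset.mem_Icc.mpr ⟨h1, h2⟩
  rcases lt_trichotomy (s i) (s' i) with h | h | h
  · exact absurd (unique_aux hN hp hs' hs h11.le hi h) id
  · exact h
  · exact absurd (unique_aux hN hp hs hs' h11.ge hi h) id

end Stmt0Aux

end
/-- For every `N ≥ 1` and every `(a, p) ∈ P^{2N}` there exists exactly one
stationary tuple `(s 1, ..., s N)` for `(a, p)`. -/
theorem stmt_0 (N : ℕ) (hN : 1 ≤ N) (a p : ℕ → ℝ) (hap : IsParam N a p) :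
    (∃ s : ℕ → ℝ, IsStationaryTuple N a p s) ∧
    ∀ s s' : ℕ → ℝ, IsStationaryTuple N a p s → IsStationaryTuple N a p s' →
      ∀ i, 1 ≤ i → i ≤ N → s i = s' i := by
  obtain ⟨ha1, hstep, hpfun⟩ := hap
  have hp : ∀ j ∈ Finset.Icc 1 N, 0 < p j := fun j hj => by
    have := Finset.mem_Icc.mp hj
    exact hpfun j this.1 this.2
  exact ⟨Stmt0Aux.exists_stationary hN hp ha1 hstep,
    fun s s' hs hs' => Stmt0Aux.stationary_unique hN hp hs hs'⟩
end

section
/- Let (a,p) ∈ P^{2N} and let (y_k)_{k≥0} satisfy recurrence (R), where in addition the initial function y_0 satisfies: for every i ∈ {1,...,N} and every t ≥ 0 with y_0(t) ≥ a_i, the right derivative of y_0 at t is at least q_i. Let s be the unique stationary tuple for (a,p) and set ỹ_∞(t) := Σ_{j=1}^N p_j·(t − s_j + s_1)_+. Then there exists a constant κ > 0, depending only on (a,p), such that for every such sequence (y_k) and every k ≥ 0, sup_{t≥0} |y_k(t) − ỹ_∞(t)| ≤ κ·(1 − q_1/q_N)^k, where 1 − q_1/q_N ∈ [0,1). -/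
open Filter Topology
open scoped Classical

noncomputable section

namespace Stmt1Aux

open Finset

lemma pos'_nonneg (x : ℝ) : 0 ≤ pos' x := le_max_right _ _
lemma pos'_of_nonneg {x : ℝ} (h : 0 ≤ x) : pos' x = x := max_eq_left h
lemma pos'_of_nonpos {x : ℝ} (h : x ≤ 0) : pos' x = 0 := max_eq_right h
lemma pos'_mono {x y : ℝ} (h : x ≤ y) : pos' x ≤ pos' y := max_le_max h le_rfl
lemma abs_pos'_sub (x y : ℝ) : |pos' x - pos' y| ≤ |x - y| := abs_max_sub_max_le_abs x y 0
lemma pos'_sub_le {x y : ℝ} (h : y ≤ x) : pos' x - pos' y ≤ x - y := by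
  have h1 := abs_le.mp (abs_pos'_sub x y)
  have h2 := abs_of_nonneg (by linarith : (0:ℝ) ≤ x - y)
  linarith [h1.2]

/-- The fan function with breakpoints `b`. -/
def fanF (N : ℕ) (p : ℕ → ℝ) (b : ℕ → ℝ) : ℝ → ℝ :=
  fun t => ∑ j ∈ Finset.Icc 1 N, p j * pos' (t - b j)

variable {N : ℕ} {p : ℕ → ℝ}

lemma one_mem_Icc (hN : 1 ≤ N) : (1 : ℕ) ∈ Finset.Icc 1 N := by
  simp [Finset.mem_Icc, hN]

lemma fan_continuous (b : ℕ → ℝ) : Continuous (fanF N p b) := by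
  refine continuous_finset_sum _ fun j _ => ?_
  have : Continuous fun t : ℝ => max (t - b j) 0 :=
    (continuous_id.sub continuous_const).max continuous_const
  exact continuous_const.mul this

lemma fan_zero {b : ℕ → ℝ} (hb0 : ∀ j ∈ Finset.Icc 1 N, 0 ≤ b j) : fanF N p b 0 = 0 := by
  refine Finset.sum_eq_zero fun j hj => ?_
  rw [pos'_of_nonpos (by linarith [hb0 j hj])]
  ring

/-- Lipschitz upper bound. -/
lemma fan_le (hp : ∀ j ∈ Finset.Icc 1 N, 0 < p j) (b : ℕ → ℝ) {t t' : ℝ} (h : t' ≤ t) :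
    fanF N p b t - fanF N p b t' ≤ qq p N * (t - t') := by
  rw [fanF, fanF, ← Finset.sum_sub_distrib, qq, Finset.sum_mul]
  refine Finset.sum_le_sum fun j hj => ?_
  have h1 : pos' (t - b j) - pos' (t' - b j) ≤ t - t' := by
    have := pos'_sub_le (x := t - b j) (y := t' - b j) (by linarith)
    linarith
  have h2 : 0 ≤ pos' (t - b j) - pos' (t' - b j) := by
    have := pos'_mono (x := t' - b j) (y := t - b j) (by linarith); linarith
  calc p j * pos' (t - b j) - p j * pos' (t' - b j)
      = p j * (pos' (t - b j) - pos' (t' - b j)) := by ring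
    _ ≤ p j * (t - t') := by
        exact mul_le_mul_of_nonneg_left h1 (hp j hj).le

/-- Lower bound: the fan grows at speed at least `p 1` when `b 1 = 0`. -/
lemma fan_ge (hN : 1 ≤ N) (hp : ∀ j ∈ Finset.Icc 1 N, 0 < p j) {b : ℕ → ℝ} (hb1 : b 1 = 0)
    {t t' : ℝ} (ht' : 0 ≤ t') (h : t' ≤ t) :
    p 1 * (t - t') ≤ fanF N p b t - fanF N p b t' := by
  rw [fanF, fanF, ← Finset.sum_sub_distrib]
  have key : ∀ j ∈ Finset.Icc 1 N,
      0 ≤ p j * pos' (t - b j) - p j * pos' (t' - b j) := by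
    intro j hj
    have h2 : pos' (t' - b j) ≤ pos' (t - b j) := pos'_mono (by linarith)
    nlinarith [(hp j hj).le]
  have h1 : p 1 * pos' (t - b 1) - p 1 * pos' (t' - b 1) = p 1 * (t - t') := by
    rw [hb1, sub_zero, sub_zero, pos'_of_nonneg (by linarith), pos'_of_nonneg (by linarith)]
    ring
  calc p 1 * (t - t') = p 1 * pos' (t - b 1) - p 1 * pos' (t' - b 1) := h1.symm
    _ ≤ _ := Finset.single_le_sum (f := fun j => p j * pos' (t - b j) - p j * pos' (t' - b j))
        key (one_mem_Icc hN)

lemma fan_lb (hN : 1 ≤ N) (hp : ∀ j ∈ Finset.Icc 1 N, 0 < p j) {b : ℕ → ℝ} (hb1 : b 1 = 0)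
    {t : ℝ} (ht : 0 ≤ t) : p 1 * t ≤ fanF N p b t := by
  have h1 : p 1 * pos' (t - b 1) = p 1 * t := by rw [hb1, sub_zero, pos'_of_nonneg ht]
  calc p 1 * t = p 1 * pos' (t - b 1) := h1.symm
    _ ≤ _ := Finset.single_le_sum (f := fun j => p j * pos' (t - b j))
        (fun j hj => mul_nonneg (hp j hj).le (pos'_nonneg _)) (one_mem_Icc hN)

lemma fan_ub (hp : ∀ j ∈ Finset.Icc 1 N, 0 < p j) {b : ℕ → ℝ}
    (hb0 : ∀ j ∈ Finset.Icc 1 N, 0 ≤ b j) {t : ℝ} (ht : 0 ≤ t) :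
    fanF N p b t ≤ qq p N * t := by
  have := fan_le hp b (t := t) (t' := 0) ht
  rw [fan_zero hb0] at this
  linarith

/-- Hitting times are ordered with values. -/
lemma hit_le (hN : 1 ≤ N) (hp : ∀ j ∈ Finset.Icc 1 N, 0 < p j) {b : ℕ → ℝ} (hb1 : b 1 = 0)
    {t u x : ℝ} (ht : 0 ≤ t) (hu : 0 ≤ u) (hx : fanF N p b t = x) (hxu : x ≤ fanF N p b u) :
    t ≤ u := by
  by_contra hcon
  push_neg at hcon
  have := fan_ge hN hp hb1 hu hcon.le
  have hp1 : 0 < p 1 := hp 1 (one_mem_Icc hN)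
  nlinarith

/-- Existence of hitting times. -/
lemma exists_hit (hN : 1 ≤ N) (hp : ∀ j ∈ Finset.Icc 1 N, 0 < p j) {b : ℕ → ℝ}
    (hb1 : b 1 = 0) (hb0 : ∀ j ∈ Finset.Icc 1 N, 0 ≤ b j) {x : ℝ} (hx : 0 ≤ x) :
    ∃ t, 0 ≤ t ∧ fanF N p b t = x := by
  have hp1 : 0 < p 1 := hp 1 (one_mem_Icc hN)
  have h0 : (0:ℝ) ≤ x / p 1 := div_nonneg hx hp1.le
  have hub : x ≤ fanF N p b (x / p 1) := by
    have := fan_lb hN hp hb1 h0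
    rw [mul_div_cancel₀ _ hp1.ne'] at this
    exact this
  have hIcc : x ∈ Set.Icc (fanF N p b 0) (fanF N p b (x / p 1)) := by
    rw [fan_zero hb0]; exact ⟨hx, hub⟩
  have := intermediate_value_Icc h0 (fan_continuous b).continuousOn hIcc
  obtain ⟨t, ht, hft⟩ := this
  exact ⟨t, ht.1, hft⟩

/-- Characterization of `tinv` for functions agreeing with a fan on `[0,∞)`. -/
lemma tinv_spec (hN : 1 ≤ N) (hp : ∀ j ∈ Finset.Icc 1 N, 0 < p j) {b : ℕ → ℝ}
    (hb1 : b 1 = 0) (hb0 : ∀ j ∈ Finset.Icc 1 N, 0 ≤ b j) {y : ℝ → ℝ}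
    (hy : ∀ t, 0 ≤ t → y t = fanF N p b t) {x : ℝ} (hx : 0 ≤ x) :
    0 ≤ tinv y x ∧ fanF N p b (tinv y x) = x := by
  obtain ⟨t, ht, hft⟩ := exists_hit hN hp hb1 hb0 hx
  have hex : ∃ t ∈ Set.Ici (0:ℝ), y t = x := ⟨t, ht, by rw [hy t ht]; exact hft⟩
  have h1 : tinv y x ∈ Set.Ici (0:ℝ) := Function.invFunOn_mem hex
  have h2 : y (tinv y x) = x := Function.invFunOn_eq hex
  exact ⟨h1, by rw [← hy _ h1]; exact h2⟩


lemma qq_pos (hN : 1 ≤ N) (hp : ∀ j ∈ Finset.Icc 1 N, 0 < p j) : 0 < qq p N := by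
  rw [qq]
  exact Finset.sum_pos (fun j hj => hp j hj) ⟨1, one_mem_Icc hN⟩

lemma p1_le_qqN (hN : 1 ≤ N) (hp : ∀ j ∈ Finset.Icc 1 N, 0 < p j) : p 1 ≤ qq p N := by
  rw [qq]
  exact Finset.single_le_sum (fun j hj => (hp j hj).le) (one_mem_Icc hN)

lemma lam_nonneg (hN : 1 ≤ N) (hp : ∀ j ∈ Finset.Icc 1 N, 0 < p j) :
    0 ≤ 1 - p 1 / qq p N := by
  have h1 := qq_pos hN hp
  have h2 := p1_le_qqN hN hp
  have : p 1 / qq p N ≤ 1 := (div_le_one h1).mpr h2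
  linarith

lemma Icc_one_eq_insert (hN : 1 ≤ N) :
    Finset.Icc 1 N = insert 1 (Finset.Icc 2 N) := by
  ext x
  simp only [Finset.mem_Icc, Finset.mem_insert]
  omega

/-- The key shift lemma: comparison of hitting times. -/
lemma hit_shift (hN : 1 ≤ N) (hp : ∀ j ∈ Finset.Icc 1 N, 0 < p j)
    {b b' : ℕ → ℝ} (hb1 : b 1 = 0) (hb'1 : b' 1 = 0)
    (hb0 : ∀ j ∈ Finset.Icc 1 N, 0 ≤ b j) (hb'0 : ∀ j ∈ Finset.Icc 1 N, 0 ≤ b' j)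
    {M x t t' : ℝ} (hM : 0 ≤ M) (hle : ∀ j ∈ Finset.Icc 1 N, b j ≤ b' j + M)
    (ht : 0 ≤ t) (ht' : 0 ≤ t') (hx : fanF N p b t = x) (hx' : fanF N p b' t' = x) :
    t ≤ t' + (1 - p 1 / qq p N) * M := by
  set lam : ℝ := 1 - p 1 / qq p N with hlam
  have hlam0 : 0 ≤ lam := lam_nonneg hN hp
  have hqN : 0 < qq p N := qq_pos hN hp
  have hz0 : 0 ≤ t' + lam * M := by positivity
  -- it suffices to show the fan of b is above x at time t' + lam * M
  suffices hsuff : x ≤ fanF N p b (t' + lam * M) by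
    exact hit_le hN hp hb1 ht hz0 hx hsuff
  -- the auxiliary shifted breakpoints
  set b'' : ℕ → ℝ := fun j => if j = 1 then 0 else b' j + M with hb''
  have step1 : fanF N p b'' (t' + lam * M) ≤ fanF N p b (t' + lam * M) := by
    refine Finset.sum_le_sum fun j hj => ?_
    refine mul_le_mul_of_nonneg_left (pos'_mono ?_) (hp j hj).le
    have : b j ≤ b'' j := by
      by_cases h1 : j = 1
      · subst h1; simp [hb'', hb1]
      · simp only [hb'', h1, if_false]; exact hle j hj
    linarith
  by_cases hcase : qq p N * t' ≤ p 1 * M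
  · -- case A
    have hA : p 1 * (t' + lam * M) ≤ fanF N p b'' (t' + lam * M) :=
      fan_lb hN hp (by simp [hb'']) hz0
    have hB : x ≤ qq p N * t' := by
      rw [← hx']; exact fan_ub hp hb'0 ht'
    have hC : qq p N * t' ≤ p 1 * (t' + lam * M) := by
      have h1 : lam * qq p N = qq p N - p 1 := by
        rw [hlam, sub_mul, div_mul_cancel₀ _ hqN.ne', one_mul]
      have h2 : lam * (qq p N * t') ≤ lam * (p 1 * M) :=
        mul_le_mul_of_nonneg_left hcase hlam0
      nlinarith
    linarith
  · -- case B
    push_neg at hcase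
    set u : ℝ := t' - p 1 / qq p N * M with hu
    have hu0 : 0 ≤ u := by
      rw [hu]
      have : p 1 / qq p N * M ≤ t' := by
        rw [div_mul_eq_mul_div, div_le_iff₀ hqN]
        nlinarith
      linarith
    have hut' : u ≤ t' := by
      rw [hu]
      have hp1 : 0 < p 1 := hp 1 (one_mem_Icc hN)
      have : 0 ≤ p 1 / qq p N * M := by positivity
      linarith
    have huM : u + M = t' + lam * M := by rw [hu, hlam]; ring
    have key : fanF N p b'' (u + M) = fanF N p b' u + p 1 * M := by
      rw [fanF, fanF]
      have hterm : ∀ j ∈ Finset.Icc 1 N, p j * pos' (u + M - b'' j)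
          = p j * pos' (u - b' j) + (if j = 1 then p 1 * M else 0) := by
        intro j hj
        by_cases h1 : j = 1
        · subst h1
          have hb''1 : b'' 1 = 0 := by simp [hb'']
          rw [hb''1, hb'1, if_pos rfl, sub_zero, sub_zero,
            pos'_of_nonneg (by linarith), pos'_of_nonneg hu0]
          ring
        · have hb''j : b'' j = b' j + M := by simp [hb'', h1]
          rw [hb''j, if_neg h1, show u + M - (b' j + M) = u - b' j by ring]
          ring
      rw [Finset.sum_congr rfl hterm, Finset.sum_add_distrib,
        Finset.sum_ite_eq' (Finset.Icc 1 N) 1 (fun _ => p 1 * M)]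
      simp [one_mem_Icc hN]
    have est : fanF N p b' t' - qq p N * (t' - u) ≤ fanF N p b' u := by
      have := fan_le hp b' hut'
      linarith
    have hq : qq p N * (t' - u) = p 1 * M := by
      rw [hu]
      field_simp
      ring
    have key2 : fanF N p b'' (t' + lam * M) = fanF N p b' u + p 1 * M := by
      rw [← huM]; exact key
    rw [hx'] at est
    linarith [step1]


lemma qq_succ (p : ℕ → ℝ) (n : ℕ) : qq p (n+1) = qq p n + p (n+1) := by
  rw [qq, qq, Finset.sum_Icc_succ_top (by omega)]

lemma chain_le {f : ℕ → ℝ} {N : ℕ} (h : ∀ i, 1 ≤ i → i < N → f i ≤ f (i+1)) :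
    ∀ j, j ≤ N → ∀ i, 1 ≤ i → i ≤ j → f i ≤ f j := by
  intro j
  induction j with
  | zero => intro _ i h1 h2; omega
  | succ n ih =>
    intro hn i h1 h2
    rcases Nat.eq_or_lt_of_le h2 with he | hl
    · rw [he]
    · have hin : i ≤ n := by omega
      have h1n : 1 ≤ n := by omega
      exact (ih (by omega) i h1 hin).trans (h n h1n (by omega))

lemma fan_diff_le (hp : ∀ j ∈ Finset.Icc 1 N, 0 < p j) (b b' : ℕ → ℝ) (t : ℝ) :
    |fanF N p b t - fanF N p b' t| ≤ ∑ j ∈ Finset.Icc 1 N, p j * |b j - b' j| := by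
  rw [fanF, fanF, ← Finset.sum_sub_distrib]
  refine (Finset.abs_sum_le_sum_abs _ _).trans (Finset.sum_le_sum fun j hj => ?_)
  rw [show p j * pos' (t - b j) - p j * pos' (t - b' j)
      = p j * (pos' (t - b j) - pos' (t - b' j)) by ring, abs_mul,
    abs_of_nonneg (hp j hj).le]
  refine mul_le_mul_of_nonneg_left ?_ (hp j hj).le
  calc |pos' (t - b j) - pos' (t - b' j)| ≤ |(t - b j) - (t - b' j)| := abs_pos'_sub _ _
    _ = |b j - b' j| := by rw [show (t - b j) - (t - b' j) = -(b j - b' j) by ring, abs_neg]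

lemma c_bound (hN : 1 ≤ N) (hp : ∀ j ∈ Finset.Icc 1 N, 0 < p j)
    {a c : ℕ → ℝ} (haN : 0 < a N) (hale : ∀ j, 1 ≤ j → j ≤ N → a j ≤ a N)
    (hc1 : c 1 = 0) (hcm : ∀ i j, 1 ≤ i → i ≤ j → j ≤ N → c i ≤ c j)
    {y0 : ℝ → ℝ} (hy0 : ∀ t, 0 ≤ t → y0 t = fanF N p c t)
    (hrD : ∀ i, 1 ≤ i → i ≤ N → ∀ t, 0 ≤ t → a i ≤ y0 t → qq p i ≤ rD y0 t) :
    ∀ j ∈ Finset.Icc 1 N, c j ≤ a N / p 1 + 1 := by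
  intro j hj
  obtain ⟨hj1, hjN⟩ := Finset.mem_Icc.mp hj
  obtain ⟨n, rfl⟩ : ∃ n, j = n + 1 := ⟨j - 1, by omega⟩
  by_contra hcon
  push_neg at hcon
  have hp1 : 0 < p 1 := hp 1 (one_mem_Icc hN)
  have haN0 : 0 ≤ a N / p 1 := by positivity
  set F : Finset ℕ := (Finset.Icc 1 N).filter (fun l => c l < c (n+1)) with hF
  set E : Finset ℝ := insert (a N / p 1) (F.image c) with hE
  have hEne : E.Nonempty := Finset.insert_nonempty _ _
  set m : ℝ := E.max' hEne with hm
  have hm1 : a N / p 1 ≤ m := Finset.le_max' E _ (Finset.mem_insert_self _ _)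
  have hm2 : ∀ l ∈ F, c l ≤ m := fun l hl =>
    Finset.le_max' E _ (Finset.mem_insert_of_mem (Finset.mem_image_of_mem c hl))
  have hmlt : m < c (n+1) := by
    rw [hm]
    rw [Finset.max'_lt_iff]
    intro x hx
    rcases Finset.mem_insert.mp hx with h | h
    · rw [h]; linarith
    · obtain ⟨l, hl, rfl⟩ := Finset.mem_image.mp h
      exact (Finset.mem_filter.mp hl).2
  set t : ℝ := (m + c (n+1))/2 with htdef
  have hmt : m < t := by rw [htdef]; linarith
  have htc : t < c (n+1) := by rw [htdef]; linarith
  have ht0 : 0 ≤ t := by linarith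
  have hyt : a (n+1) ≤ y0 t := by
    rw [hy0 t ht0]
    have h1 : p 1 * t ≤ fanF N p c t := fan_lb hN hp hc1 ht0
    have h2 : a N < p 1 * t := by
      have h3 : a N / p 1 < t := lt_of_le_of_lt hm1 hmt
      rw [div_lt_iff₀ hp1] at h3; linarith
    linarith [hale (n+1) hj1 hjN]
  have hder := hrD (n+1) hj1 hjN t ht0 hyt
  set Q : ℝ := ∑ l ∈ F, p l with hQ
  have hg : HasDerivAt (fun x : ℝ => ∑ l ∈ F, p l * (x - c l)) Q t := by
    have hterm : ∀ l ∈ F, HasDerivAt (fun x : ℝ => p l * (x - c l)) (p l) t := by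
      intro l _
      simpa using ((hasDerivAt_id t).sub_const (c l)).const_mul (p l)
    simpa [hQ] using HasDerivAt.fun_sum hterm
  have hev : ∀ x ∈ Set.Ico t (c (n+1)), y0 x = ∑ l ∈ F, p l * (x - c l) := by
    intro x hx
    rw [hy0 x (le_trans ht0 hx.1), fanF,
      ← Finset.sum_filter_add_sum_filter_not (Finset.Icc 1 N) (fun l => c l < c (n+1))]
    have hz : ∑ l ∈ (Finset.Icc 1 N).filter (fun l => ¬ c l < c (n+1)),
        p l * pos' (x - c l) = 0 := by
      refine Finset.sum_eq_zero fun l hl => ?_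
      have hcl : c (n+1) ≤ c l := not_lt.mp (Finset.mem_filter.mp hl).2
      rw [pos'_of_nonpos (by linarith [hx.2])]; ring
    rw [hz, add_zero]
    refine Finset.sum_congr rfl fun l hl => ?_
    have hcl : c l ≤ m := hm2 l hl
    rw [pos'_of_nonneg (by linarith [hx.1])]
  have hyder : HasDerivWithinAt y0 Q (Set.Ici t) t := by
    refine (hg.hasDerivWithinAt).congr_of_eventuallyEq ?_ ?_
    · have h1 : Set.Iio (c (n+1)) ∈ 𝓝[Set.Ici t] t := nhdsWithin_le_nhds (Iio_mem_nhds htc)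
      filter_upwards [h1, self_mem_nhdsWithin] with x hx1 hx2
      exact hev x ⟨hx2, hx1⟩
    · exact hev t ⟨le_rfl, htc⟩
  have hrDeq : rD y0 t = Q := hyder.derivWithin (uniqueDiffOn_Ici t t Set.self_mem_Ici)
  have hFsub : F ⊆ Finset.Icc 1 n := by
    intro l hl
    obtain ⟨hlm, hlc⟩ := Finset.mem_filter.mp hl
    obtain ⟨hl1, hlN⟩ := Finset.mem_Icc.mp hlm
    rw [Finset.mem_Icc]
    refine ⟨hl1, ?_⟩
    by_contra hcon2
    push_neg at hcon2
    have hle2 : n + 1 ≤ l := by omega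
    exact absurd (hcm (n+1) l hj1 hle2 hlN) (not_le.mpr hlc)
  have hQle : Q ≤ qq p n := by
    rw [hQ, qq]
    refine Finset.sum_le_sum_of_subset_of_nonneg hFsub fun l hl _ => ?_
    obtain ⟨hl1, hlj⟩ := Finset.mem_Icc.mp hl
    exact (hp l (Finset.mem_Icc.mpr ⟨hl1, by omega⟩)).le
  have hqstep := qq_succ p n
  have hpj : 0 < p (n+1) := hp (n+1) hj
  rw [hrDeq] at hder
  linarith

end Stmt1Aux

end

/-- Exponential convergence to the stationary trajectory for sequences
satisfying recurrence (R) whose initial function moves at speed at least `q i` beyond `a i`. -/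
theorem stmt_1 (N : ℕ) (hN : 1 ≤ N) (a p : ℕ → ℝ) (hap : IsParam N a p)
    (s : ℕ → ℝ) (hs : IsStationaryTuple N a p s) :
    ∃ κ : ℝ, 0 < κ ∧ (0 ≤ 1 - qq p 1 / qq p N ∧ 1 - qq p 1 / qq p N < 1) ∧
      ∀ y : ℕ → ℝ → ℝ, SatisfiesR N a p y →
        (∀ i, 1 ≤ i → i ≤ N → ∀ t : ℝ, 0 ≤ t → a i ≤ y 0 t → qq p i ≤ rD (y 0) t) →
        ∀ k : ℕ, ∀ t : ℝ, 0 ≤ t →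
          |y k t - ∑ j ∈ Finset.Icc 1 N, p j * pos' (t - s j + s 1)| ≤
            κ * (1 - qq p 1 / qq p N) ^ k := by
  classical
  obtain ⟨ha1, hamono, hppos⟩ := hap
  obtain ⟨hs1, hsmono, hstat⟩ := hs
  have hp : ∀ j ∈ Finset.Icc 1 N, 0 < p j := fun j hj => by
    obtain ⟨h1, h2⟩ := Finset.mem_Icc.mp hj; exact hppos j h1 h2
  have hp1 : 0 < p 1 := hp 1 (Stmt1Aux.one_mem_Icc hN)
  have hq1 : qq p 1 = p 1 := by rw [qq]; simp
  have hqN : 0 < qq p N := Stmt1Aux.qq_pos hN hp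
  have hlam_eq : 1 - qq p 1 / qq p N = 1 - p 1 / qq p N := by rw [hq1]
  set lam : ℝ := 1 - qq p 1 / qq p N with hlamdef
  have hlam0 : 0 ≤ lam := by rw [hlam_eq]; exact Stmt1Aux.lam_nonneg hN hp
  have hlam1 : lam < 1 := by
    rw [hlamdef]
    have h1 : 0 < qq p 1 / qq p N := by rw [hq1]; positivity
    linarith
  have hachain : ∀ i j, 1 ≤ i → i ≤ j → j ≤ N → a i ≤ a j := fun i j h1 h2 h3 =>
    Stmt1Aux.chain_le (fun l hl1 hlN => (hamono l hl1 hlN).le) j h3 i h1 h2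
  have hschain : ∀ i j, 1 ≤ i → i ≤ j → j ≤ N → s i ≤ s j := fun i j h1 h2 h3 =>
    Stmt1Aux.chain_le (fun l hl1 hlN => (hsmono l hl1 hlN).le) j h3 i h1 h2
  have ha_pos : ∀ j, 1 ≤ j → j ≤ N → 0 < a j := fun j h1 h2 =>
    lt_of_lt_of_le ha1 (hachain 1 j le_rfl h1 h2)
  have hs_pos : ∀ j, 1 ≤ j → j ≤ N → 0 < s j := fun j h1 h2 =>
    lt_of_lt_of_le hs1 (hschain 1 j le_rfl h1 h2)
  -- the stationary fan
  set btil : ℕ → ℝ := fun j => s j - s 1 with hbtil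
  have hbtil1 : btil 1 = 0 := by simp [hbtil]
  have hbtil0 : ∀ j ∈ Finset.Icc 1 N, 0 ≤ btil j := by
    intro j hj
    obtain ⟨h1, h2⟩ := Finset.mem_Icc.mp hj
    have := hschain 1 j le_rfl h1 h2
    simp only [hbtil]; linarith
  have hbtilub : ∀ j ∈ Finset.Icc 1 N, btil j ≤ s N := by
    intro j hj
    obtain ⟨h1, h2⟩ := Finset.mem_Icc.mp hj
    have := hschain j N h1 h2 le_rfl
    simp only [hbtil]; linarith
  have hfan_btil : ∀ i, 1 ≤ i → i ≤ N → Stmt1Aux.fanF N p btil (s i) = a i := by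
    intro i h1 h2
    simp only [Stmt1Aux.fanF]
    rw [hstat i h1 h2]
    refine Finset.sum_congr rfl fun j hj => ?_
    have harg : s i - btil j = s i - s j + s 1 := by simp only [hbtil]; ring
    rw [harg]
  have htarget : ∀ t : ℝ, (∑ j ∈ Finset.Icc 1 N, p j * pos' (t - s j + s 1))
      = Stmt1Aux.fanF N p btil t := by
    intro t
    simp only [Stmt1Aux.fanF]
    refine Finset.sum_congr rfl fun j hj => ?_
    have harg : t - btil j = t - s j + s 1 := by simp only [hbtil]; ring
    rw [harg]
  by_cases hN1 : N = 1
  · -- trivial case N = 1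
    subst hN1
    refine ⟨1, one_pos, ⟨hlam0, hlam1⟩, ?_⟩
    intro y hy hrd k t ht
    obtain ⟨⟨c, hc1, hc0, hcmono, hy0⟩, hrec⟩ := hy
    have hzero : y k t - ∑ j ∈ Finset.Icc 1 1, p j * pos' (t - s j + s 1) = 0 := by
      have hT : ∑ j ∈ Finset.Icc 1 1, p j * pos' (t - s j + s 1) = p 1 * pos' t := by
        rw [Finset.Icc_self, Finset.sum_singleton]
        congr 2
        ring
      cases k with
      | zero =>
        rw [hy0 t ht, hT, Finset.Icc_self, Finset.sum_singleton, hc1, sub_zero]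
        ring
      | succ n =>
        rw [hrec n t ht, hT, Finset.Icc_self, Finset.sum_singleton]
        have harg : t - tinv (y n) (a 1) + tinv (y n) (a 1) = t := by ring
        rw [harg]
        ring
    rw [hzero, abs_zero]
    positivity
  · -- main case : N ≥ 2, hence lam > 0
    have hN2 : 2 ≤ N := by omega
    have hq1N : qq p 1 < qq p N := by
      have hqmono : ∀ i j, 1 ≤ i → i ≤ j → j ≤ N → qq p i ≤ qq p j := fun i j h1 h2 h3 =>
        Stmt1Aux.chain_le (f := fun l => qq p l)
          (fun l hl1 hlN => by
            have hstep := Stmt1Aux.qq_succ p l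
            have hpl := hp (l+1) (Finset.mem_Icc.mpr ⟨by omega, by omega⟩)
            linarith) j h3 i h1 h2
      have h2N : qq p 2 ≤ qq p N := hqmono 2 N (by omega) hN2 le_rfl
      have h12 : qq p 1 < qq p 2 := by
        have hstep := Stmt1Aux.qq_succ p 1
        have hp2 := hp 2 (Finset.mem_Icc.mpr ⟨by omega, hN2⟩)
        linarith
      linarith
    have hlampos : 0 < lam := by
      rw [hlamdef]
      have h1 : qq p 1 / qq p N < 1 := (div_lt_one hqN).mpr hq1N
      linarith
    have haN : 0 < a N := ha_pos N hN le_rfl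
    have hsN : 0 < s N := hs_pos N hN le_rfl
    set S0 : ℝ := a N / p 1 + s N with hS0
    have hS0nn : 0 ≤ S0 := by rw [hS0]; positivity
    set K0 : ℝ := qq p N * (a N / p 1 + 1 + s N) with hK0
    have hK0nn : 0 ≤ K0 := by rw [hK0]; positivity
    set K1 : ℝ := qq p N * S0 / lam with hK1
    have hK1nn : 0 ≤ K1 := by rw [hK1]; positivity
    refine ⟨K0 + K1 + 1, by positivity, ⟨hlam0, hlam1⟩, ?_⟩
    intro y hy hrd
    obtain ⟨⟨c, hc1, hc0, hcmono, hy0⟩, hrec⟩ := hy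
    have hc0' : ∀ j ∈ Finset.Icc 1 N, 0 ≤ c j := fun j hj => by
      obtain ⟨h1, h2⟩ := Finset.mem_Icc.mp hj; exact hc0 j h1 h2
    have hy0' : ∀ u : ℝ, 0 ≤ u → y 0 u = Stmt1Aux.fanF N p c u := fun u hu => by
      simp only [Stmt1Aux.fanF]; exact hy0 u hu
    have hcchain : ∀ i j, 1 ≤ i → i ≤ j → j ≤ N → c i ≤ c j := fun i j h1 h2 h3 =>
      Stmt1Aux.chain_le hcmono j h3 i h1 h2
    have hcK : ∀ j ∈ Finset.Icc 1 N, c j ≤ a N / p 1 + 1 :=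
      Stmt1Aux.c_bound hN hp haN
        (fun j h1 h2 => hachain j N h1 h2 le_rfl) hc1 hcchain hy0' hrd
    -- breakpoints of the iterates
    set τ : ℕ → ℕ → ℝ := fun k j => tinv (y k) (a j) with hτ
    set β : ℕ → ℕ → ℝ := fun k j => if j = 1 then 0 else τ k j - τ k 1 with hβ
    have hβ1 : ∀ k, β k 1 = 0 := fun k => by simp [hβ]
    have hyfan : ∀ k, ∀ u : ℝ, 0 ≤ u → y (k+1) u = Stmt1Aux.fanF N p (β k) u := by
      intro k u hu
      rw [hrec k u hu]
      simp only [Stmt1Aux.fanF]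
      refine Finset.sum_congr rfl fun j hj => ?_
      by_cases h1 : j = 1
      · subst h1
        rw [hβ1 k]
        congr 2
        ring
      · have hb : β k j = τ k j - τ k 1 := by simp [hβ, h1]
        rw [hb]
        congr 2
        ring
    -- the contraction invariant
    have hInv : ∀ k : ℕ, (∀ j ∈ Finset.Icc 1 N, 0 ≤ β k j) ∧
        ∃ u v : ℝ, 0 ≤ u ∧ 0 ≤ v ∧ u + v ≤ S0 * lam ^ k ∧
          ∀ j ∈ Finset.Icc 1 N, β k j - btil j ≤ u ∧ btil j - β k j ≤ v := by
      intro k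
      induction k with
      | zero =>
        have hspec : ∀ j ∈ Finset.Icc 1 N,
            0 ≤ τ 0 j ∧ Stmt1Aux.fanF N p c (τ 0 j) = a j := by
          intro j hj
          obtain ⟨h1, h2⟩ := Finset.mem_Icc.mp hj
          exact Stmt1Aux.tinv_spec hN hp hc1 hc0' hy0' (ha_pos j h1 h2).le
        have hτm : ∀ j ∈ Finset.Icc 1 N, τ 0 1 ≤ τ 0 j := by
          intro j hj
          obtain ⟨h1, h2⟩ := Finset.mem_Icc.mp hj
          obtain ⟨ht1, hf1⟩ := hspec 1 (Stmt1Aux.one_mem_Icc hN)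
          obtain ⟨htj, hfj⟩ := hspec j hj
          refine Stmt1Aux.hit_le hN hp hc1 ht1 htj hf1 ?_
          rw [hfj]; exact hachain 1 j le_rfl h1 h2
        have hτub : ∀ j ∈ Finset.Icc 1 N, τ 0 j ≤ a N / p 1 := by
          intro j hj
          obtain ⟨h1, h2⟩ := Finset.mem_Icc.mp hj
          obtain ⟨htj, hfj⟩ := hspec j hj
          have haj := (ha_pos j h1 h2).le
          have hdiv : (0:ℝ) ≤ a j / p 1 := by positivity
          have hfl : a j ≤ Stmt1Aux.fanF N p c (a j / p 1) := by
            have hlb := Stmt1Aux.fan_lb hN hp hc1 hdiv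
            rw [mul_div_cancel₀ _ hp1.ne'] at hlb
            exact hlb
          have h3 : τ 0 j ≤ a j / p 1 := Stmt1Aux.hit_le hN hp hc1 htj hdiv hfj hfl
          have h4 : a j / p 1 ≤ a N / p 1 := by
            gcongr
            exact hachain j N h1 h2 le_rfl
          exact h3.trans h4
        constructor
        · intro j hj
          by_cases h1 : j = 1
          · subst h1; rw [hβ1]
          · have hb : β 0 j = τ 0 j - τ 0 1 := by simp [hβ, h1]
            rw [hb]
            have := hτm j hj
            linarith
        · refine ⟨a N / p 1, s N, by positivity, hsN.le, ?_, ?_⟩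
          · rw [pow_zero, mul_one, hS0]
          · intro j hj
            have hτ1 := (hspec 1 (Stmt1Aux.one_mem_Icc hN)).1
            have hb0 := hbtil0 j hj
            have hbub := hbtilub j hj
            by_cases h1 : j = 1
            · subst h1
              rw [hβ1, hbtil1]
              constructor
              · simp; positivity
              · simp [hsN.le]
            · have hb : β 0 j = τ 0 j - τ 0 1 := by simp [hβ, h1]
              have hm := hτm j hj
              have hub := hτub j hj
              rw [hb]
              clear_value τ β btil
              constructor
              · linarith only [hub, hτ1, hb0]
              · linarith only [hbub, hm]
      | succ n ih =>
        obtain ⟨hβ0, u, v, hu0, hv0, huv, hbd⟩ := ih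
        have hβn1 : β n 1 = 0 := hβ1 n
        have hl : (1 : ℝ) - p 1 / qq p N = lam := hlam_eq.symm
        have hspec : ∀ j ∈ Finset.Icc 1 N,
            0 ≤ τ (n+1) j ∧ Stmt1Aux.fanF N p (β n) (τ (n+1) j) = a j := by
          intro j hj
          obtain ⟨h1, h2⟩ := Finset.mem_Icc.mp hj
          exact Stmt1Aux.tinv_spec hN hp hβn1 hβ0 (hyfan n) (ha_pos j h1 h2).le
        have hup : ∀ j ∈ Finset.Icc 1 N, τ (n+1) j ≤ s j + lam * u := by
          intro j hj
          obtain ⟨h1, h2⟩ := Finset.mem_Icc.mp hj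
          obtain ⟨htj, hfj⟩ := hspec j hj
          have := Stmt1Aux.hit_shift hN hp hβn1 hbtil1 hβ0 hbtil0 hu0
            (fun l hl' => by linarith [(hbd l hl').1])
            htj (hs_pos j h1 h2).le hfj (hfan_btil j h1 h2)
          rw [hl] at this
          exact this
        have hdown : ∀ j ∈ Finset.Icc 1 N, s j ≤ τ (n+1) j + lam * v := by
          intro j hj
          obtain ⟨h1, h2⟩ := Finset.mem_Icc.mp hj
          obtain ⟨htj, hfj⟩ := hspec j hj
          have := Stmt1Aux.hit_shift hN hp hbtil1 hβn1 hbtil0 hβ0 hv0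
            (fun l hl' => by linarith [(hbd l hl').2])
            (hs_pos j h1 h2).le htj (hfan_btil j h1 h2) hfj
          rw [hl] at this
          exact this
        have hτpos : ∀ j ∈ Finset.Icc 1 N, τ (n+1) 1 ≤ τ (n+1) j := by
          intro j hj
          obtain ⟨h1, h2⟩ := Finset.mem_Icc.mp hj
          obtain ⟨ht1, hf1⟩ := hspec 1 (Stmt1Aux.one_mem_Icc hN)
          obtain ⟨htj, hfj⟩ := hspec j hj
          refine Stmt1Aux.hit_le hN hp hβn1 ht1 htj hf1 ?_
          rw [hfj]; exact hachain 1 j le_rfl h1 h2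
        have he1u : τ (n+1) 1 - s 1 ≤ lam * u := by
          have := hup 1 (Stmt1Aux.one_mem_Icc hN); linarith
        have he1v : -(lam * v) ≤ τ (n+1) 1 - s 1 := by
          have := hdown 1 (Stmt1Aux.one_mem_Icc hN); linarith
        constructor
        · intro j hj
          by_cases h1 : j = 1
          · subst h1; rw [hβ1]
          · have hb : β (n+1) j = τ (n+1) j - τ (n+1) 1 := by simp [hβ, h1]
            rw [hb]
            have := hτpos j hj
            linarith
        · refine ⟨lam * u - (τ (n+1) 1 - s 1), lam * v + (τ (n+1) 1 - s 1),
            by linarith, by linarith, ?_, ?_⟩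
          · have hmul : lam * (u + v) ≤ lam * (S0 * lam ^ n) :=
              mul_le_mul_of_nonneg_left huv hlam0
            have hpow : S0 * lam ^ (n+1) = lam * (S0 * lam ^ n) := by rw [pow_succ]; ring
            linarith
          · intro j hj
            by_cases h1 : j = 1
            · subst h1
              rw [hβ1, hbtil1]
              constructor
              · linarith
              · linarith
            · have hb : β (n+1) j = τ (n+1) j - τ (n+1) 1 := by simp [hβ, h1]
              have hbt : btil j = s j - s 1 := by simp [hbtil]
              have h2 := hup j hj
              have h3 := hdown j hj
              rw [hb, hbt]
              constructor
              · linarith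
              · linarith
    -- conclusion
    intro k t ht
    rw [htarget t]
    cases k with
    | zero =>
      rw [hy0' t ht, pow_zero, mul_one]
      have hd := Stmt1Aux.fan_diff_le hp c btil t
      have hsum : ∑ j ∈ Finset.Icc 1 N, p j * |c j - btil j|
          ≤ ∑ j ∈ Finset.Icc 1 N, p j * (a N / p 1 + 1 + s N) := by
        refine Finset.sum_le_sum fun j hj => ?_
        refine mul_le_mul_of_nonneg_left ?_ (hp j hj).le
        have h1 := hcK j hj
        have h2 := hc0' j hj
        have h3 := hbtil0 j hj
        have h4 := hbtilub j hj
        have h5 : (0:ℝ) ≤ a N / p 1 := by positivity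
        clear_value btil
        rw [abs_le]
        constructor
        · linarith only [h2, h4, h5]
        · linarith only [h1, h3, hsN]
      rw [← Finset.sum_mul] at hsum
      have hqq : (∑ j ∈ Finset.Icc 1 N, p j) = qq p N := by rw [qq]
      rw [hqq] at hsum
      have : |Stmt1Aux.fanF N p c t - Stmt1Aux.fanF N p btil t| ≤ K0 := by
        rw [hK0]; exact hd.trans hsum
      linarith
    | succ n =>
      rw [hyfan n t ht]
      obtain ⟨hβ0, u, v, hu0, hv0, huv, hbd⟩ := hInv n
      have hd := Stmt1Aux.fan_diff_le hp (β n) btil t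
      have hsum : ∑ j ∈ Finset.Icc 1 N, p j * |β n j - btil j|
          ≤ ∑ j ∈ Finset.Icc 1 N, p j * (u + v) := by
        refine Finset.sum_le_sum fun j hj => ?_
        refine mul_le_mul_of_nonneg_left ?_ (hp j hj).le
        obtain ⟨h1, h2⟩ := hbd j hj
        rw [abs_le]
        constructor
        · linarith
        · linarith
      rw [← Finset.sum_mul] at hsum
      have hqq : (∑ j ∈ Finset.Icc 1 N, p j) = qq p N := by rw [qq]
      rw [hqq] at hsum
      have hstep : qq p N * (u + v) ≤ qq p N * (S0 * lam ^ n) :=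
        mul_le_mul_of_nonneg_left huv hqN.le
      have hK1eq : K1 * lam ^ (n+1) = qq p N * (S0 * lam ^ n) := by
        rw [hK1, pow_succ]
        field_simp
      have hrest : 0 ≤ (K0 + 1) * lam ^ (n+1) := by positivity
      have hfinal : (K0 + K1 + 1) * lam ^ (n+1)
          = K1 * lam ^ (n+1) + (K0 + 1) * lam ^ (n+1) := by ring
      rw [hfinal, hK1eq]
      linarith
end

section
/- Let (a,p) ∈ P^{2N} and let (y_k^{(1)})_{k≥0} and (y_k^{(2)})_{k≥0} be two sequences of functions satisfying recurrence (R), with inverse functions t_k^{(m)} and right derivative functions v_k^{(m)} for m = 1,2. If v_0^{(1)}(t_0^{(1)}(x)) ≤ v_0^{(2)}(t_0^{(2)}(x)) for every x ≥ 0, then for every k ≥ 1 and every x ≥ 0, v_k^{(1)}(t_k^{(1)}(x)) ≤ v_k^{(2)}(t_k^{(2)}(x)). -/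
open Filter Topology
open scoped Classical

noncomputable section Stmt2Aux

namespace S2

open Set

variable {N : ℕ} {p c d e : ℕ → ℝ}

lemma pos'_nonneg (x : ℝ) : 0 ≤ pos' x := le_max_right _ _

lemma pos'_mono {x y : ℝ} (h : x ≤ y) : pos' x ≤ pos' y := max_le_max h le_rfl

lemma pos'_of_nonpos {x : ℝ} (h : x ≤ 0) : pos' x = 0 := max_eq_right h

lemma pos'_of_nonneg {x : ℝ} (h : 0 ≤ x) : pos' x = x := max_eq_left h

/-- The canonical piecewise linear trajectory with breakpoints `c`. -/
noncomputable def Fc (N : ℕ) (p c : ℕ → ℝ) : ℝ → ℝ :=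
  fun t => ∑ j ∈ Finset.Icc 1 N, p j * pos' (t - c j)

/-- The explicit inverse of `Fc` on `[0, ∞)`. -/
noncomputable def Texp (N : ℕ) (p c : ℕ → ℝ) (x : ℝ) : ℝ :=
  x / qq p N + ∑ j ∈ Finset.Ioc 1 N, (1 / qq p (j - 1) - 1 / qq p j) * min x (Fc N p c (c j))

/-- Good breakpoint tuples. -/
def Good (N : ℕ) (c : ℕ → ℝ) : Prop :=
  c 1 = 0 ∧ (∀ j, 1 ≤ j → j ≤ N → 0 ≤ c j) ∧ ∀ i j, 1 ≤ i → i ≤ j → j ≤ N → c i ≤ c j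

lemma good_of_adj (h1 : c 1 = 0) (h2 : ∀ j, 1 ≤ j → j ≤ N → 0 ≤ c j)
    (h3 : ∀ j, 1 ≤ j → j < N → c j ≤ c (j + 1)) : Good N c := by
  refine ⟨h1, h2, ?_⟩
  intro i j hi hij
  induction j, hij using Nat.le_induction with
  | base => intro _; exact le_rfl
  | succ j hij ih => intro hjN; exact le_trans (ih (by omega)) (h3 j (by omega) (by omega))

lemma tinv_congr {f g : ℝ → ℝ} (h : Set.EqOn f g (Set.Ici 0)) : tinv f = tinv g := by
  funext x
  have hpred : (fun a => a ∈ Set.Ici (0:ℝ) ∧ f a = x) = (fun a => a ∈ Set.Ici (0:ℝ) ∧ g a = x) := by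
    funext a
    by_cases ha : a ∈ Set.Ici (0:ℝ)
    · simp only [ha, true_and, h ha]
    · simp only [ha, false_and]
  unfold tinv Function.invFunOn
  rw [hpred]

lemma rD_congr {f g : ℝ → ℝ} {t : ℝ} (h : Set.EqOn f g (Set.Ici t)) : rD f t = rD g t :=
  derivWithin_congr h (h Set.self_mem_Ici)

lemma rD_Fc {t : ℝ} :
    rD (Fc N p c) t = ∑ j ∈ Finset.Icc 1 N, if c j ≤ t then p j else 0 := by
  have H : HasDerivWithinAt (Fc N p c)
      (∑ j ∈ Finset.Icc 1 N, if c j ≤ t then p j else 0) (Set.Ici t) t := by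
    apply HasDerivWithinAt.fun_sum
    intro j _
    by_cases h : c j ≤ t
    · simp only [if_pos h]
      have hlin : HasDerivWithinAt (fun s : ℝ => p j * (s - c j)) (p j) (Set.Ici t) t := by
        simpa using (((hasDerivAt_id t).sub_const (c j)).const_mul (p j)).hasDerivWithinAt
      apply hlin.congr
      · intro s hs
        rw [pos'_of_nonneg (by simp only [Set.mem_Ici] at hs; linarith)]
      · rw [pos'_of_nonneg (by linarith)]
    · simp only [if_neg h]
      have hev : (fun s : ℝ => p j * pos' (s - c j)) =ᶠ[nhdsWithin t (Set.Ici t)] (fun _ => 0) := by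
        filter_upwards [mem_nhdsWithin_of_mem_nhds (Iio_mem_nhds (not_le.mp h))] with s hs
        rw [pos'_of_nonpos (by simp only [Set.mem_Iio] at hs; linarith), mul_zero]
      exact (hasDerivWithinAt_const t (Set.Ici t) (0:ℝ)).congr_of_eventuallyEq hev
        (by rw [pos'_of_nonpos (by linarith [not_le.mp h]), mul_zero])
  exact H.derivWithin (uniqueDiffOn_Ici t t Set.self_mem_Ici)

lemma sum_split {M : ℕ} (hm : M ≤ N) (f : ℕ → ℝ) :
    ∑ j ∈ Finset.Icc 1 N, f j = ∑ j ∈ Finset.Icc 1 M, f j + ∑ j ∈ Finset.Ioc M N, f j := by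
  have h1 : Finset.Icc 1 N = Finset.Ioc 0 N := by
    ext x; simp only [Finset.mem_Icc, Finset.mem_Ioc]; omega
  have h2 : Finset.Icc 1 M = Finset.Ioc 0 M := by
    ext x; simp only [Finset.mem_Icc, Finset.mem_Ioc]; omega
  rw [h1, h2, Finset.sum_Ioc_consecutive _ (Nat.zero_le M) hm]

lemma min_diff {x y b b' : ℝ} (hxy : x ≤ y) (hb : b' ≤ b) :
    min y b' - min x b' ≤ min y b - min x b := by
  simp only [min_def]
  split_ifs <;> linarith

section WithHyp

variable (hN : 1 ≤ N) (hp : ∀ i, 1 ≤ i → i ≤ N → 0 < p i)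

include hp

lemma qq_pos {i : ℕ} (h1 : 1 ≤ i) (h2 : i ≤ N) : 0 < qq p i := by
  apply Finset.sum_pos
  · intro j hj
    obtain ⟨hj1, hj2⟩ := Finset.mem_Icc.mp hj
    exact hp j hj1 (le_trans hj2 h2)
  · exact ⟨1, Finset.mem_Icc.mpr ⟨le_rfl, h1⟩⟩

lemma qq_mono {i j : ℕ} (hij : i ≤ j) (hj : j ≤ N) : qq p i ≤ qq p j := by
  apply Finset.sum_le_sum_of_subset_of_nonneg (Finset.Icc_subset_Icc_right hij)
  intro k hk _
  obtain ⟨hk1, hk2⟩ := Finset.mem_Icc.mp hk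
  exact (hp k hk1 (le_trans hk2 hj)).le

lemma Fc_mono {s t : ℝ} (hst : s ≤ t) : Fc N p c s ≤ Fc N p c t := by
  apply Finset.sum_le_sum
  intro j hj
  obtain ⟨hj1, hj2⟩ := Finset.mem_Icc.mp hj
  exact mul_le_mul_of_nonneg_left (pos'_mono (by linarith)) (hp j hj1 hj2).le

lemma Fc_nonneg (t : ℝ) : 0 ≤ Fc N p c t := by
  apply Finset.sum_nonneg
  intro j hj
  obtain ⟨hj1, hj2⟩ := Finset.mem_Icc.mp hj
  exact mul_nonneg (hp j hj1 hj2).le (pos'_nonneg _)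

lemma Fc_zero (hc : Good N c) : Fc N p c 0 = 0 := by
  apply Finset.sum_eq_zero
  intro j hj
  obtain ⟨hj1, hj2⟩ := Finset.mem_Icc.mp hj
  rw [pos'_of_nonpos (by linarith [hc.2.1 j hj1 hj2]), mul_zero]

lemma beta_repr (hc : Good N c) {j : ℕ} (hj1 : 1 ≤ j) (hj2 : j ≤ N) :
    Fc N p c (c j) = qq p j * c j - ∑ l ∈ Finset.Icc 1 j, p l * c l := by
  unfold Fc
  rw [sum_split hj2]
  have e1 : ∑ l ∈ Finset.Icc 1 j, p l * pos' (c j - c l)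
      = ∑ l ∈ Finset.Icc 1 j, (p l * c j - p l * c l) := by
    apply Finset.sum_congr rfl
    intro l hl
    obtain ⟨hl1, hl2⟩ := Finset.mem_Icc.mp hl
    rw [pos'_of_nonneg (by linarith [hc.2.2 l j hl1 hl2 hj2]), mul_sub]
  have e2 : ∑ l ∈ Finset.Ioc j N, p l * pos' (c j - c l) = 0 := by
    apply Finset.sum_eq_zero
    intro l hl
    obtain ⟨hl1, hl2⟩ := Finset.mem_Ioc.mp hl
    rw [pos'_of_nonpos (by linarith [hc.2.2 j l hj1 hl1.le hl2]), mul_zero]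
  rw [e1, e2, add_zero, Finset.sum_sub_distrib, ← Finset.sum_mul]
  rfl

lemma inner_id (hc : Good N c) :
    ∀ m, 1 ≤ m → m ≤ N →
      ∑ j ∈ Finset.Ioc 1 m, (1 / qq p (j - 1) - 1 / qq p j) * Fc N p c (c j)
        = (∑ l ∈ Finset.Icc 1 m, p l * c l) / qq p m := by
  intro m hm1
  induction m, hm1 using Nat.le_induction with
  | base =>
    intro _
    simp [Finset.Icc_self, hc.1]
  | succ m hm ih =>
    intro hmN
    have hq1 : 0 < qq p m := qq_pos hp hm (by omega)
    have hq2 : 0 < qq p (m + 1) := qq_pos hp (by omega) hmN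
    have hqs : qq p (m + 1) = qq p m + p (m + 1) := Finset.sum_Icc_succ_top (by omega) _
    have hSs : ∑ l ∈ Finset.Icc 1 (m + 1), p l * c l
        = (∑ l ∈ Finset.Icc 1 m, p l * c l) + p (m + 1) * c (m + 1) :=
      Finset.sum_Icc_succ_top (by omega) _
    rw [Finset.sum_Ioc_succ_top hm, ih (by omega),
      beta_repr hp hc (by omega) hmN, hSs]
    simp only [Nat.add_sub_cancel]
    rw [hqs] at hq2 ⊢
    have hq1' : qq p m ≠ 0 := ne_of_gt hq1
    have hq2' : qq p m + p (m + 1) ≠ 0 := ne_of_gt hq2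
    field_simp
    ring

lemma telescope {M m : ℕ} (hm : m ≤ M) :
    ∑ j ∈ Finset.Ioc m M, (1 / qq p (j - 1) - 1 / qq p j) = 1 / qq p m - 1 / qq p M := by
  induction M, hm using Nat.le_induction with
  | base => simp
  | succ M hM ih =>
    rw [Finset.sum_Ioc_succ_top hM, ih]
    simp only [Nat.add_sub_cancel]
    ring

lemma delta_nonneg (hN : 1 ≤ N) {j : ℕ} (hj1 : 1 < j) (hj2 : j ≤ N) :
    0 ≤ 1 / qq p (j - 1) - 1 / qq p j := by
  have h1 : 0 < qq p (j - 1) := qq_pos hp (by omega) (by omega)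
  have h2 : qq p (j - 1) ≤ qq p j := qq_mono hp (by omega) hj2
  have := one_div_le_one_div_of_le h1 h2
  linarith

include hN

lemma Fc_strictMonoOn (hc : Good N c) : StrictMonoOn (Fc N p c) (Set.Ici 0) := by
  intro s hs t ht hst
  apply Finset.sum_lt_sum
  · intro j hj
    obtain ⟨hj1, hj2⟩ := Finset.mem_Icc.mp hj
    exact mul_le_mul_of_nonneg_left (pos'_mono (by linarith)) (hp j hj1 hj2).le
  · refine ⟨1, Finset.mem_Icc.mpr ⟨le_rfl, hN⟩, ?_⟩
    rw [hc.1, sub_zero, sub_zero, pos'_of_nonneg hs, pos'_of_nonneg (le_trans hs hst.le)]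
    exact mul_lt_mul_of_pos_left hst (hp 1 le_rfl hN)

lemma Fc_surj (hc : Good N c) {x : ℝ} (hx : 0 ≤ x) : ∃ t, 0 ≤ t ∧ Fc N p c t = x := by
  have hp1 : 0 < p 1 := hp 1 le_rfl hN
  set M : ℝ := x / p 1 with hM
  have hM0 : 0 ≤ M := div_nonneg hx hp1.le
  have hFM : x ≤ Fc N p c M := by
    have h1 : p 1 * pos' (M - c 1) = x := by
      rw [hc.1, sub_zero, pos'_of_nonneg hM0, hM, mul_div_cancel₀ _ hp1.ne']
    calc x = p 1 * pos' (M - c 1) := h1.symm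
      _ ≤ Fc N p c M := by
          apply Finset.single_le_sum (f := fun j => p j * pos' (M - c j))
          · intro j hj
            obtain ⟨hj1, hj2⟩ := Finset.mem_Icc.mp hj
            exact mul_nonneg (hp j hj1 hj2).le (pos'_nonneg _)
          · exact Finset.mem_Icc.mpr ⟨le_rfl, hN⟩
  have hcont : ContinuousOn (Fc N p c) (Set.Icc 0 M) := by
    apply Continuous.continuousOn
    apply continuous_finset_sum
    intro j _
    exact continuous_const.mul ((continuous_id.sub continuous_const).max continuous_const)
  have hmem : x ∈ Set.Icc (Fc N p c 0) (Fc N p c M) := ⟨by rw [Fc_zero hp hc]; exact hx, hFM⟩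
  obtain ⟨t, ht, hFt⟩ := intermediate_value_Icc hM0 hcont hmem
  exact ⟨t, ht.1, hFt⟩

lemma tinv_Fc_spec (hc : Good N c) {x : ℝ} (hx : 0 ≤ x) :
    tinv (Fc N p c) x ∈ Set.Ici (0:ℝ) ∧ Fc N p c (tinv (Fc N p c) x) = x := by
  obtain ⟨t, ht, hFt⟩ := Fc_surj hN hp hc hx
  exact Function.invFunOn_pos (f := Fc N p c) (s := Set.Ici 0) (b := x) ⟨t, ht, hFt⟩

lemma tinv_Fc_apply_Fc (hc : Good N c) {t : ℝ} (ht : 0 ≤ t) :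
    tinv (Fc N p c) (Fc N p c t) = t :=
  (Fc_strictMonoOn hN hp hc).injOn.leftInvOn_invFunOn ht

lemma texp_Fc (hc : Good N c) {t : ℝ} (ht : 0 ≤ t) : Texp N p c (Fc N p c t) = t := by
  obtain ⟨hc1, hc0, hcm⟩ := hc
  have hcgood : Good N c := ⟨hc1, hc0, hcm⟩
  set Mf : Finset ℕ := (Finset.Icc 1 N).filter (fun j => c j ≤ t) with hMf
  have h1M : 1 ∈ Mf := by
    simp only [hMf, Finset.mem_filter, Finset.mem_Icc]
    exact ⟨⟨le_rfl, hN⟩, by rw [hc1]; exact ht⟩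
  have hne : Mf.Nonempty := ⟨1, h1M⟩
  set m := Mf.max' hne with hm
  have hmM : m ∈ Mf := Mf.max'_mem hne
  have hmprop : (1 ≤ m ∧ m ≤ N) ∧ c m ≤ t := by
    simpa only [hMf, Finset.mem_filter, Finset.mem_Icc] using hmM
  obtain ⟨⟨hm1, hm2⟩, hm3⟩ := hmprop
  have hiff : ∀ j, 1 ≤ j → j ≤ N → (c j ≤ t ↔ j ≤ m) := by
    intro j hj1 hj2
    constructor
    · intro h
      exact Finset.le_max' Mf j (by
        simp only [hMf, Finset.mem_filter, Finset.mem_Icc]; exact ⟨⟨hj1, hj2⟩, h⟩)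
    · intro h
      exact le_trans (hcm j m hj1 h hm2) hm3
  have hq1 : 0 < qq p m := qq_pos hp hm1 hm2
  have hqN : 0 < qq p N := qq_pos hp hN le_rfl
  have hFt : Fc N p c t = qq p m * t - ∑ l ∈ Finset.Icc 1 m, p l * c l := by
    unfold Fc
    rw [sum_split hm2]
    have e1 : ∑ j ∈ Finset.Icc 1 m, p j * pos' (t - c j)
        = ∑ j ∈ Finset.Icc 1 m, (p j * t - p j * c j) := by
      apply Finset.sum_congr rfl
      intro j hj
      obtain ⟨hj1, hj2⟩ := Finset.mem_Icc.mp hj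
      have hct : c j ≤ t := (hiff j hj1 (le_trans hj2 hm2)).mpr hj2
      rw [pos'_of_nonneg (by linarith), mul_sub]
    have e2 : ∑ j ∈ Finset.Ioc m N, p j * pos' (t - c j) = 0 := by
      apply Finset.sum_eq_zero
      intro j hj
      obtain ⟨hj1, hj2⟩ := Finset.mem_Ioc.mp hj
      have hct : ¬ c j ≤ t := fun hcj => absurd ((hiff j (by omega) hj2).mp hcj) (by omega)
      rw [pos'_of_nonpos (by linarith [not_le.mp hct]), mul_zero]
    rw [e1, e2, add_zero, Finset.sum_sub_distrib, ← Finset.sum_mul]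
    rfl
  have hmin : ∑ j ∈ Finset.Ioc 1 N, (1 / qq p (j - 1) - 1 / qq p j) * min (Fc N p c t) (Fc N p c (c j))
      = (∑ l ∈ Finset.Icc 1 m, p l * c l) / qq p m
        + (1 / qq p m - 1 / qq p N) * Fc N p c t := by
    rw [← Finset.sum_Ioc_consecutive _ hm1 hm2]
    congr 1
    · rw [← inner_id hp hcgood m hm1 hm2]
      apply Finset.sum_congr rfl
      intro j hj
      obtain ⟨hj1, hj2⟩ := Finset.mem_Ioc.mp hj
      have hcj : c j ≤ t := (hiff j (by omega) (le_trans hj2 hm2)).mpr hj2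
      rw [min_eq_right]
      exact Fc_mono hp hcj
    · have e3 : ∀ j ∈ Finset.Ioc m N,
          (1 / qq p (j - 1) - 1 / qq p j) * min (Fc N p c t) (Fc N p c (c j))
            = (1 / qq p (j - 1) - 1 / qq p j) * Fc N p c t := by
        intro j hj
        obtain ⟨hj1, hj2⟩ := Finset.mem_Ioc.mp hj
        have hct : ¬ c j ≤ t := fun hcj => absurd ((hiff j (by omega) hj2).mp hcj) (by omega)
        rw [min_eq_left (Fc_mono hp (not_le.mp hct).le)]
      rw [Finset.sum_congr rfl e3, ← Finset.sum_mul, telescope hp hm2]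
  unfold Texp
  rw [hmin, hFt]
  field_simp
  ring

lemma tinv_Fc_eq_texp (hc : Good N c) {x : ℝ} (hx : 0 ≤ x) :
    tinv (Fc N p c) x = Texp N p c x := by
  obtain ⟨t, ht, hFt⟩ := Fc_surj hN hp hc hx
  rw [← hFt, tinv_Fc_apply_Fc hN hp hc ht, texp_Fc hN hp hc ht]

lemma texp_mono {x y : ℝ} (hxy : x ≤ y) : Texp N p c x ≤ Texp N p c y := by
  unfold Texp
  have hqN : 0 < qq p N := qq_pos hp hN le_rfl
  apply add_le_add
  · exact div_le_div_of_nonneg_right hxy hqN.le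
  · apply Finset.sum_le_sum
    intro j hj
    obtain ⟨hj1, hj2⟩ := Finset.mem_Ioc.mp hj
    exact mul_le_mul_of_nonneg_left (min_le_min hxy le_rfl) (delta_nonneg hp hN hj1 hj2)

lemma texp_diff_mono
    (hβ : ∀ j, 1 ≤ j → j ≤ N → Fc N p e (e j) ≤ Fc N p d (d j)) {x y : ℝ} (hxy : x ≤ y) :
    Texp N p e y - Texp N p e x ≤ Texp N p d y - Texp N p d x := by
  unfold Texp
  have key : ∑ j ∈ Finset.Ioc 1 N, (1 / qq p (j - 1) - 1 / qq p j) * min y (Fc N p e (e j))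
      - ∑ j ∈ Finset.Ioc 1 N, (1 / qq p (j - 1) - 1 / qq p j) * min x (Fc N p e (e j))
      ≤ ∑ j ∈ Finset.Ioc 1 N, (1 / qq p (j - 1) - 1 / qq p j) * min y (Fc N p d (d j))
      - ∑ j ∈ Finset.Ioc 1 N, (1 / qq p (j - 1) - 1 / qq p j) * min x (Fc N p d (d j)) := by
    rw [← Finset.sum_sub_distrib, ← Finset.sum_sub_distrib]
    apply Finset.sum_le_sum
    intro j hj
    obtain ⟨hj1, hj2⟩ := Finset.mem_Ioc.mp hj
    rw [← mul_sub, ← mul_sub]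
    exact mul_le_mul_of_nonneg_left (min_diff hxy (hβ j (by omega) hj2))
      (delta_nonneg hp hN hj1 hj2)
  linarith

lemma rD_Fc_tinv (hc : Good N c) {x : ℝ} (hx : 0 ≤ x) :
    rD (Fc N p c) (tinv (Fc N p c) x)
      = ∑ j ∈ Finset.Icc 1 N, if Fc N p c (c j) ≤ x then p j else 0 := by
  obtain ⟨hT0, hTF⟩ := tinv_Fc_spec hN hp hc hx
  rw [rD_Fc]
  apply Finset.sum_congr rfl
  intro j hj
  obtain ⟨hj1, hj2⟩ := Finset.mem_Icc.mp hj
  have hcj : 0 ≤ c j := hc.2.1 j hj1 hj2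
  have hiff : c j ≤ tinv (Fc N p c) x ↔ Fc N p c (c j) ≤ x := by
    constructor
    · intro h
      calc Fc N p c (c j) ≤ Fc N p c (tinv (Fc N p c) x) := Fc_mono hp h
        _ = x := hTF
    · intro h
      by_contra hcon
      have hlt : tinv (Fc N p c) x < c j := not_le.mp hcon
      have := Fc_strictMonoOn hN hp hc hT0 (Set.mem_Ici.mpr hcj) hlt
      rw [hTF] at this
      linarith
  exact if_congr hiff rfl rfl

lemma beta_le (hd : Good N d) (he : Good N e)
    (H : ∀ x : ℝ, 0 ≤ x →
      (∑ j ∈ Finset.Icc 1 N, if Fc N p d (d j) ≤ x then p j else 0)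
        ≤ ∑ j ∈ Finset.Icc 1 N, if Fc N p e (e j) ≤ x then p j else 0) :
    ∀ i, 1 ≤ i → i ≤ N → Fc N p e (e i) ≤ Fc N p d (d i) := by
  intro i hi1 hi2
  by_contra hcon
  have hlt : Fc N p d (d i) < Fc N p e (e i) := not_le.mp hcon
  set x := Fc N p d (d i) with hx
  have hx0 : 0 ≤ x := Fc_nonneg hp _
  have hH := H x hx0
  have hLHS : qq p i ≤ ∑ j ∈ Finset.Icc 1 N, if Fc N p d (d j) ≤ x then p j else 0 := by
    rw [sum_split hi2]
    have e1 : ∑ j ∈ Finset.Icc 1 i, (if Fc N p d (d j) ≤ x then p j else 0)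
        = ∑ j ∈ Finset.Icc 1 i, p j := by
      apply Finset.sum_congr rfl
      intro j hj
      obtain ⟨hj1, hj2⟩ := Finset.mem_Icc.mp hj
      rw [if_pos]
      exact Fc_mono hp (hd.2.2 j i hj1 hj2 hi2)
    have e2 : 0 ≤ ∑ j ∈ Finset.Ioc i N, if Fc N p d (d j) ≤ x then p j else 0 := by
      apply Finset.sum_nonneg
      intro j hj
      obtain ⟨hj1, hj2⟩ := Finset.mem_Ioc.mp hj
      split_ifs
      · exact (hp j (by omega) hj2).le
      · exact le_rfl
    rw [e1]
    unfold qq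
    linarith
  have hRHS : (∑ j ∈ Finset.Icc 1 N, if Fc N p e (e j) ≤ x then p j else 0) ≤ qq p (i - 1) := by
    rw [sum_split (show i - 1 ≤ N by omega)]
    have e1 : ∑ j ∈ Finset.Icc 1 (i - 1), (if Fc N p e (e j) ≤ x then p j else 0)
        ≤ ∑ j ∈ Finset.Icc 1 (i - 1), p j := by
      apply Finset.sum_le_sum
      intro j hj
      obtain ⟨hj1, hj2⟩ := Finset.mem_Icc.mp hj
      split_ifs
      · exact le_rfl
      · exact (hp j hj1 (by omega)).le
    have e2 : ∑ j ∈ Finset.Ioc (i - 1) N, (if Fc N p e (e j) ≤ x then p j else 0) = 0 := by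
      apply Finset.sum_eq_zero
      intro j hj
      obtain ⟨hj1, hj2⟩ := Finset.mem_Ioc.mp hj
      rw [if_neg]
      intro hle
      have : Fc N p e (e i) ≤ Fc N p e (e j) := Fc_mono hp (he.2.2 i j hi1 (by omega) hj2)
      linarith
    unfold qq
    linarith
  have hq : qq p i = qq p (i - 1) + p i := by
    have : ∑ l ∈ Finset.Icc 1 (i - 1 + 1), p l = (∑ l ∈ Finset.Icc 1 (i - 1), p l) + p (i - 1 + 1) :=
      Finset.sum_Icc_succ_top (by omega) _
    unfold qq
    rw [show i = i - 1 + 1 by omega] at *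
    exact this
  have hpi : 0 < p i := hp i hi1 hi2
  linarith

end WithHyp

end S2

end Stmt2Aux

/-- monotonicity property, Lemma 3.4 of the paper. -/
theorem stmt_2 (N : ℕ) (hN : 1 ≤ N) (a p : ℕ → ℝ) (hap : IsParam N a p)
    (y1 y2 : ℕ → ℝ → ℝ) (h1 : SatisfiesR N a p y1) (h2 : SatisfiesR N a p y2)
    (h0 : ∀ x : ℝ, 0 ≤ x → rD (y1 0) (tinv (y1 0) x) ≤ rD (y2 0) (tinv (y2 0) x)) :
    ∀ k : ℕ, 1 ≤ k → ∀ x : ℝ, 0 ≤ x →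
      rD (y1 k) (tinv (y1 k) x) ≤ rD (y2 k) (tinv (y2 k) x) := by
  classical
  obtain ⟨ha1, hastrict, hp⟩ := hap
  have amono : ∀ i j, 1 ≤ i → i ≤ j → j ≤ N → a i ≤ a j := by
    intro i j hi hij
    induction j, hij using Nat.le_induction with
    | base => intro _; exact le_rfl
    | succ j hij ih => intro hjN; exact le_trans (ih (by omega)) (hastrict j (by omega) (by omega)).le
  have apos : ∀ j, 1 ≤ j → j ≤ N → (0:ℝ) ≤ a j := fun j hj hjN =>
    le_of_lt (lt_of_lt_of_le ha1 (amono 1 j le_rfl hj hjN))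
  obtain ⟨⟨c1, hc11, hc12, hc13, hy1⟩, hrec1⟩ := h1
  obtain ⟨⟨c2, hc21, hc22, hc23, hy2⟩, hrec2⟩ := h2
  have key : ∀ k : ℕ, ∃ d e : ℕ → ℝ, S2.Good N d ∧ S2.Good N e ∧
      Set.EqOn (y1 k) (S2.Fc N p d) (Set.Ici 0) ∧ Set.EqOn (y2 k) (S2.Fc N p e) (Set.Ici 0) ∧
      ∀ j, 1 ≤ j → j ≤ N → S2.Fc N p e (e j) ≤ S2.Fc N p d (d j) := by
    intro k
    induction k with
    | zero =>
      have good1 : S2.Good N c1 := S2.good_of_adj hc11 hc12 hc13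
      have good2 : S2.Good N c2 := S2.good_of_adj hc21 hc22 hc23
      have eq1 : Set.EqOn (y1 0) (S2.Fc N p c1) (Set.Ici 0) := fun t ht => hy1 t ht
      have eq2 : Set.EqOn (y2 0) (S2.Fc N p c2) (Set.Ici 0) := fun t ht => hy2 t ht
      refine ⟨c1, c2, good1, good2, eq1, eq2, ?_⟩
      apply S2.beta_le hN hp good1 good2
      intro x hx
      have h := h0 x hx
      rw [S2.tinv_congr eq1, S2.tinv_congr eq2] at h
      rw [S2.rD_congr (eq1.mono (Set.Ici_subset_Ici.mpr (S2.tinv_Fc_spec hN hp good1 hx).1)),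
        S2.rD_congr (eq2.mono (Set.Ici_subset_Ici.mpr (S2.tinv_Fc_spec hN hp good2 hx).1)),
        S2.rD_Fc_tinv hN hp good1 hx, S2.rD_Fc_tinv hN hp good2 hx] at h
      exact h
    | succ k ih =>
      obtain ⟨d, e, hd, he, h1e, h2e, hβ⟩ := ih
      set D : ℕ → ℝ := fun j => S2.Texp N p d (a j) - S2.Texp N p d (a 1) with hD
      set E : ℕ → ℝ := fun j => S2.Texp N p e (a j) - S2.Texp N p e (a 1) with hE
      have goodD : S2.Good N D := by
        refine ⟨sub_self _, ?_, ?_⟩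
        · intro j hj hjN
          exact sub_nonneg.mpr (S2.texp_mono hN hp (amono 1 j le_rfl hj hjN))
        · intro i j hi hij hjN
          exact sub_le_sub_right (S2.texp_mono hN hp (amono i j hi hij hjN)) _
      have goodE : S2.Good N E := by
        refine ⟨sub_self _, ?_, ?_⟩
        · intro j hj hjN
          exact sub_nonneg.mpr (S2.texp_mono hN hp (amono 1 j le_rfl hj hjN))
        · intro i j hi hij hjN
          exact sub_le_sub_right (S2.texp_mono hN hp (amono i j hi hij hjN)) _
      have tv1 : ∀ j, 1 ≤ j → j ≤ N → tinv (y1 k) (a j) = S2.Texp N p d (a j) := by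
        intro j hj hjN
        rw [S2.tinv_congr h1e, S2.tinv_Fc_eq_texp hN hp hd (apos j hj hjN)]
      have tv2 : ∀ j, 1 ≤ j → j ≤ N → tinv (y2 k) (a j) = S2.Texp N p e (a j) := by
        intro j hj hjN
        rw [S2.tinv_congr h2e, S2.tinv_Fc_eq_texp hN hp he (apos j hj hjN)]
      have eq1 : Set.EqOn (y1 (k + 1)) (S2.Fc N p D) (Set.Ici 0) := by
        intro t ht
        rw [hrec1 k t ht]
        apply Finset.sum_congr rfl
        intro j hj
        obtain ⟨hj1, hj2⟩ := Finset.mem_Icc.mp hj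
        rw [tv1 j hj1 hj2, tv1 1 le_rfl hN]
        congr 1
        simp only [hD]
        ring
      have eq2 : Set.EqOn (y2 (k + 1)) (S2.Fc N p E) (Set.Ici 0) := by
        intro t ht
        rw [hrec2 k t ht]
        apply Finset.sum_congr rfl
        intro j hj
        obtain ⟨hj1, hj2⟩ := Finset.mem_Icc.mp hj
        rw [tv2 j hj1 hj2, tv2 1 le_rfl hN]
        congr 1
        simp only [hE]
        ring
      refine ⟨D, E, goodD, goodE, eq1, eq2, ?_⟩
      intro j hj hjN
      apply Finset.sum_le_sum
      intro l hl
      obtain ⟨hl1, hl2⟩ := Finset.mem_Icc.mp hl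
      apply mul_le_mul_of_nonneg_left _ (hp l hl1 hl2).le
      have hDE1 : E j - E l = S2.Texp N p e (a j) - S2.Texp N p e (a l) := by
        simp only [hE]; ring
      have hDE2 : D j - D l = S2.Texp N p d (a j) - S2.Texp N p d (a l) := by
        simp only [hD]; ring
      rw [hDE1, hDE2]
      rcases le_total (a l) (a j) with h | h
      · exact S2.pos'_mono (S2.texp_diff_mono hN hp hβ h)
      · rw [S2.pos'_of_nonpos (sub_nonpos.mpr (S2.texp_mono hN hp h))]
        exact S2.pos'_nonneg _
  intro k _ x hx
  obtain ⟨d, e, hd, he, h1e, h2e, hβ⟩ := key k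
  rw [S2.tinv_congr h1e, S2.tinv_congr h2e,
    S2.rD_congr (h1e.mono (Set.Ici_subset_Ici.mpr (S2.tinv_Fc_spec hN hp hd hx).1)),
    S2.rD_congr (h2e.mono (Set.Ici_subset_Ici.mpr (S2.tinv_Fc_spec hN hp he hx).1)),
    S2.rD_Fc_tinv hN hp hd hx, S2.rD_Fc_tinv hN hp he hx]
  apply Finset.sum_le_sum
  intro j hj
  obtain ⟨hj1, hj2⟩ := Finset.mem_Icc.mp hj
  by_cases h : S2.Fc N p d (d j) ≤ x
  · rw [if_pos h, if_pos (le_trans (hβ j hj1 hj2) h)]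
  · rw [if_neg h]
    split_ifs
    · exact (hp j hj1 hj2).le
    · exact le_rfl
end

section
/- Let (a,p) ∈ P^{2N} and let (y_k^{(1)})_{k≥0} and (y_k^{(2)})_{k≥0} be two sequences of functions satisfying recurrence (R), with inverse functions t_k^{(m)} and right derivative functions v_k^{(m)} for m = 1,2. If v_0^{(1)}(t_0^{(1)}(x)) ≤ v_0^{(2)}(t_0^{(2)}(x)) for every x ≥ 0, then for every k ≥ 1 and every t ≥ 0, y_k^{(1)}(t) ≤ y_k^{(2)}(t). -/
open Filter Topology
open scoped Classical

namespace S3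

open Set

/-- Canonical piecewise-linear function with breakpoints `c`. -/
noncomputable def cf (N : ℕ) (p c : ℕ → ℝ) : ℝ → ℝ :=
  fun t => ∑ j ∈ Finset.Icc 1 N, p j * pos' (t - c j)

/-- `c` is a canonical breakpoint sequence. -/
def Canon (N : ℕ) (c : ℕ → ℝ) : Prop :=
  c 1 = 0 ∧ (∀ j, 1 ≤ j → j ≤ N → 0 ≤ c j) ∧ (∀ i j, 1 ≤ i → i ≤ j → j ≤ N → c i ≤ c j)

/-- The right slope of `cf` at `t`. -/
noncomputable def slopeAt (N : ℕ) (p c : ℕ → ℝ) (t : ℝ) : ℝ :=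
  ∑ j ∈ (Finset.Icc 1 N).filter (fun j => c j ≤ t), p j

lemma pos'_nonneg (x : ℝ) : 0 ≤ pos' x := le_max_right _ _

lemma pos'_mono {x y : ℝ} (h : x ≤ y) : pos' x ≤ pos' y := max_le_max h le_rfl

lemma pos'_of_nonneg {x : ℝ} (h : 0 ≤ x) : pos' x = x := max_eq_left h

lemma pos'_of_nonpos {x : ℝ} (h : x ≤ 0) : pos' x = 0 := max_eq_right h

lemma mono_of_step {N : ℕ} {c : ℕ → ℝ} (h : ∀ j, 1 ≤ j → j < N → c j ≤ c (j + 1)) :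
    ∀ j, j ≤ N → ∀ i, 1 ≤ i → i ≤ j → c i ≤ c j := by
  intro j
  induction j with
  | zero => intro _ i hi hij; omega
  | succ n ih =>
    intro hn i hi hij
    rcases Nat.eq_or_lt_of_le hij with he | hlt
    · rw [he]
    · have h1 : c i ≤ c n := ih (by omega) i hi (by omega)
      have h2 : c n ≤ c (n + 1) := h n (by omega) (by omega)
      linarith

section CF

variable {N : ℕ} {p c d : ℕ → ℝ}

lemma cf_continuous : Continuous (cf N p c) := by
  unfold cf
  refine continuous_finset_sum _ fun j _ => ?_
  simp only [pos']
  exact continuous_const.mul ((continuous_id.sub continuous_const).max continuous_const)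

lemma cf_mono (hp : ∀ j, 1 ≤ j → j ≤ N → 0 < p j) : Monotone (cf N p c) := by
  intro s t hst
  refine Finset.sum_le_sum fun j hj => ?_
  have hj' := Finset.mem_Icc.mp hj
  exact mul_le_mul_of_nonneg_left (pos'_mono (by linarith)) (hp j hj'.1 hj'.2).le

lemma cf_nonneg (hp : ∀ j, 1 ≤ j → j ≤ N → 0 < p j) (t : ℝ) : 0 ≤ cf N p c t := by
  refine Finset.sum_nonneg fun j hj => ?_
  have hj' := Finset.mem_Icc.mp hj
  exact mul_nonneg (hp j hj'.1 hj'.2).le (pos'_nonneg _)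

lemma cf_strict (hN : 1 ≤ N) (hp : ∀ j, 1 ≤ j → j ≤ N → 0 < p j) (hc1 : c 1 = 0)
    {s t : ℝ} (hs : 0 ≤ s) (hst : s < t) : cf N p c s < cf N p c t := by
  unfold cf
  refine Finset.sum_lt_sum (fun j hj => ?_) ⟨1, Finset.mem_Icc.mpr ⟨le_rfl, hN⟩, ?_⟩
  · have hj' := Finset.mem_Icc.mp hj
    exact mul_le_mul_of_nonneg_left (pos'_mono (by linarith)) (hp j hj'.1 hj'.2).le
  · rw [hc1, sub_zero, sub_zero, pos'_of_nonneg hs, pos'_of_nonneg (hs.trans hst.le)]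
    exact mul_lt_mul_of_pos_left hst (hp 1 le_rfl hN)

lemma cf_zero (hp : ∀ j, 1 ≤ j → j ≤ N → 0 < p j)
    (hc0 : ∀ j, 1 ≤ j → j ≤ N → 0 ≤ c j) : cf N p c 0 = 0 := by
  refine Finset.sum_eq_zero fun j hj => ?_
  have hj' := Finset.mem_Icc.mp hj
  rw [pos'_of_nonpos (by linarith [hc0 j hj'.1 hj'.2]), mul_zero]

lemma cf_incr (hN : 1 ≤ N) (hp : ∀ j, 1 ≤ j → j ≤ N → 0 < p j) (hc1 : c 1 = 0)
    {s t : ℝ} (hs : 0 ≤ s) (hst : s ≤ t) :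
    p 1 * (t - s) ≤ cf N p c t - cf N p c s := by
  unfold cf
  rw [← Finset.sum_sub_distrib]
  have h1 : p 1 * pos' (t - c 1) - p 1 * pos' (s - c 1) = p 1 * (t - s) := by
    rw [hc1, sub_zero, sub_zero, pos'_of_nonneg hs, pos'_of_nonneg (hs.trans hst)]; ring
  have key : ∀ j ∈ Finset.Icc 1 N, (0:ℝ) ≤ p j * pos' (t - c j) - p j * pos' (s - c j) := by
    intro j hj
    have hj' := Finset.mem_Icc.mp hj
    have := mul_le_mul_of_nonneg_left (pos'_mono (show s - c j ≤ t - c j by linarith))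
      (hp j hj'.1 hj'.2).le
    linarith
  calc p 1 * (t - s) = p 1 * pos' (t - c 1) - p 1 * pos' (s - c 1) := h1.symm
    _ ≤ _ := Finset.single_le_sum key (Finset.mem_Icc.mpr ⟨le_rfl, hN⟩)

lemma cf_surj (hN : 1 ≤ N) (hp : ∀ j, 1 ≤ j → j ≤ N → 0 < p j) (hc : Canon N c)
    {x : ℝ} (hx : 0 ≤ x) : ∃ t, 0 ≤ t ∧ cf N p c t = x := by
  have hp1 := hp 1 le_rfl hN
  set T := x / p 1 with hT
  have hT0 : 0 ≤ T := div_nonneg hx hp1.le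
  have h0 : cf N p c 0 = 0 := cf_zero hp hc.2.1
  have hfT : x ≤ cf N p c T := by
    have := cf_incr hN hp hc.1 (le_refl (0:ℝ)) hT0
    have hpT : p 1 * (T - 0) = x := by
      rw [sub_zero, hT, mul_div_cancel₀ _ hp1.ne']
    rw [hpT, h0] at this; linarith
  have hmem : x ∈ Icc (cf N p c 0) (cf N p c T) := ⟨by rw [h0]; exact hx, hfT⟩
  obtain ⟨t, ht, hft⟩ := intermediate_value_Icc hT0 cf_continuous.continuousOn hmem
  exact ⟨t, ht.1, hft⟩

variable {y : ℝ → ℝ}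

lemma tinv_spec (hN : 1 ≤ N) (hp : ∀ j, 1 ≤ j → j ≤ N → 0 < p j) (hc : Canon N c)
    (hy : ∀ t, 0 ≤ t → y t = cf N p c t) {x : ℝ} (hx : 0 ≤ x) :
    0 ≤ tinv y x ∧ cf N p c (tinv y x) = x := by
  obtain ⟨t, ht, hft⟩ := cf_surj hN hp hc hx
  have hex : ∃ a ∈ Ici (0:ℝ), y a = x := ⟨t, ht, by rw [hy t ht]; exact hft⟩
  have h1 : tinv y x ∈ Ici (0:ℝ) := Function.invFunOn_mem hex
  have h2 : y (tinv y x) = x := Function.invFunOn_eq hex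
  exact ⟨h1, by rw [← hy _ h1]; exact h2⟩

lemma tinv_unique (hN : 1 ≤ N) (hp : ∀ j, 1 ≤ j → j ≤ N → 0 < p j) (hc : Canon N c)
    (hy : ∀ t, 0 ≤ t → y t = cf N p c t) {t x : ℝ} (ht : 0 ≤ t) (hft : cf N p c t = x) :
    tinv y x = t := by
  have hx : 0 ≤ x := hft ▸ cf_nonneg hp t
  obtain ⟨h1, h2⟩ := tinv_spec hN hp hc hy hx
  rcases lt_trichotomy (tinv y x) t with h | h | h
  · have := cf_strict hN hp hc.1 h1 h
    rw [h2, hft] at this; linarith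
  · exact h
  · have := cf_strict hN hp hc.1 ht h
    rw [h2, hft] at this; linarith

lemma tinv_mono (hN : 1 ≤ N) (hp : ∀ j, 1 ≤ j → j ≤ N → 0 < p j) (hc : Canon N c)
    (hy : ∀ t, 0 ≤ t → y t = cf N p c t) {x x' : ℝ} (hx : 0 ≤ x) (hxx : x ≤ x') :
    tinv y x ≤ tinv y x' := by
  by_contra hcon
  push_neg at hcon
  have h1 := tinv_spec hN hp hc hy hx
  have h2 := tinv_spec hN hp hc hy (hx.trans hxx)
  have := cf_strict hN hp hc.1 h2.1 hcon
  rw [h1.2, h2.2] at this; linarith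

lemma tinv_lip (hN : 1 ≤ N) (hp : ∀ j, 1 ≤ j → j ≤ N → 0 < p j) (hc : Canon N c)
    (hy : ∀ t, 0 ≤ t → y t = cf N p c t) {x x' : ℝ} (hx : 0 ≤ x) (hxx : x ≤ x') :
    tinv y x' - tinv y x ≤ (x' - x) / p 1 := by
  have hp1 := hp 1 le_rfl hN
  have h1 := tinv_spec hN hp hc hy hx
  have h2 := tinv_spec hN hp hc hy (hx.trans hxx)
  have hm := tinv_mono hN hp hc hy hx hxx
  have := cf_incr hN hp hc.1 h1.1 hm
  rw [h1.2, h2.2] at this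
  rw [le_div_iff₀ hp1]
  linarith

lemma tinv_continuousOn (hN : 1 ≤ N) (hp : ∀ j, 1 ≤ j → j ≤ N → 0 < p j) (hc : Canon N c)
    (hy : ∀ t, 0 ≤ t → y t = cf N p c t) : ContinuousOn (tinv y) (Ici 0) := by
  have hp1 := hp 1 le_rfl hN
  refine (LipschitzOnWith.of_dist_le_mul (K := ⟨1 / p 1, by positivity⟩) ?_).continuousOn
  intro x hx x' hx'
  simp only [Real.dist_eq, NNReal.coe_mk]
  rcases le_total x x' with h | h
  · have h1 := tinv_lip hN hp hc hy hx h
    have h2 := tinv_mono hN hp hc hy hx h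
    rw [abs_of_nonpos (by linarith), abs_of_nonpos (by linarith)]
    have : (x' - x) / p 1 = 1 / p 1 * (x' - x) := by ring
    change _ ≤ 1 / p 1 * _
    linarith
  · have h1 := tinv_lip hN hp hc hy hx' h
    have h2 := tinv_mono hN hp hc hy hx' h
    rw [abs_of_nonneg (by linarith), abs_of_nonneg (by linarith)]
    have : (x - x') / p 1 = 1 / p 1 * (x - x') := by ring
    change _ ≤ 1 / p 1 * _
    linarith

lemma cf_local (t : ℝ) : ∃ δ : ℝ, 0 < δ ∧ ∀ h : ℝ, 0 ≤ h → h < δ →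
    cf N p c (t + h) = cf N p c t + slopeAt N p c t * h := by
  classical
  set S := insert (1:ℝ) (((Finset.Icc 1 N).filter (fun j => t < c j)).image (fun j => c j - t))
    with hS
  have hSne : S.Nonempty := ⟨1, Finset.mem_insert_self _ _⟩
  refine ⟨S.min' hSne, ?_, ?_⟩
  · rcases Finset.mem_insert.mp (S.min'_mem hSne) with h | h
    · rw [h]; norm_num
    · obtain ⟨j, hj, hje⟩ := Finset.mem_image.mp h
      have := (Finset.mem_filter.mp hj).2
      rw [← hje]; linarith
  · intro h h0 hδ
    unfold cf slopeAt
    have key : ∀ j ∈ Finset.Icc 1 N,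
        p j * pos' (t + h - c j) = p j * pos' (t - c j) + (if c j ≤ t then p j * h else 0) := by
      intro j hj
      by_cases hcj : c j ≤ t
      · rw [if_pos hcj, pos'_of_nonneg (by linarith), pos'_of_nonneg (by linarith)]; ring
      · rw [if_neg hcj]
        push_neg at hcj
        have hin : c j - t ∈ S :=
          Finset.mem_insert_of_mem (Finset.mem_image_of_mem _ (Finset.mem_filter.mpr ⟨hj, hcj⟩))
        have hmin := S.min'_le _ hin
        rw [pos'_of_nonpos (by linarith), pos'_of_nonpos (by linarith)]
        ring
    rw [Finset.sum_congr rfl key, Finset.sum_add_distrib, ← Finset.sum_filter, ← Finset.sum_mul]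

lemma cf_hasDerivWithinAt (t : ℝ) :
    HasDerivWithinAt (cf N p c) (slopeAt N p c t) (Ici t) t := by
  obtain ⟨δ, hδ, hlin⟩ := cf_local (N := N) (p := p) (c := c) t
  have hmem : Ico t (t + δ) ∈ 𝓝[Ici t] t := Ico_mem_nhdsGE_of_mem ⟨le_rfl, by linarith⟩
  have hlin' : HasDerivWithinAt (fun u => cf N p c t + slopeAt N p c t * (u - t))
      (slopeAt N p c t) (Ici t) t := by
    have h1 : HasDerivAt (fun u : ℝ => cf N p c t + slopeAt N p c t * (u - t))
        (slopeAt N p c t * 1) t :=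
      (((hasDerivAt_id t).sub_const t).const_mul (slopeAt N p c t)).const_add (cf N p c t)
    simpa using h1.hasDerivWithinAt
  refine hlin'.congr_of_eventuallyEq ?_ (by simp)
  filter_upwards [hmem] with u hu
  have heq := hlin (u - t) (by linarith [hu.1]) (by linarith [hu.2])
  have h2 : t + (u - t) = u := by ring
  rw [h2] at heq
  exact heq

lemma p1_le_slope (hN : 1 ≤ N) (hp : ∀ j, 1 ≤ j → j ≤ N → 0 < p j) (hc1 : c 1 = 0)
    {t : ℝ} (ht : 0 ≤ t) : p 1 ≤ slopeAt N p c t := by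
  unfold slopeAt
  refine Finset.single_le_sum (fun j hj => ?_) ?_
  · have hj' := Finset.mem_Icc.mp (Finset.mem_filter.mp hj).1
    exact (hp j hj'.1 hj'.2).le
  · exact Finset.mem_filter.mpr ⟨Finset.mem_Icc.mpr ⟨le_rfl, hN⟩, by rw [hc1]; exact ht⟩

lemma slope_pos (hN : 1 ≤ N) (hp : ∀ j, 1 ≤ j → j ≤ N → 0 < p j) (hc1 : c 1 = 0)
    {t : ℝ} (ht : 0 ≤ t) : 0 < slopeAt N p c t :=
  lt_of_lt_of_le (hp 1 le_rfl hN) (p1_le_slope hN hp hc1 ht)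

lemma rD_eq (hy : ∀ t, 0 ≤ t → y t = cf N p c t) {t : ℝ} (ht : 0 ≤ t) :
    rD y t = slopeAt N p c t := by
  have h1 : HasDerivWithinAt y (slopeAt N p c t) (Ici t) t :=
    (cf_hasDerivWithinAt t).congr (fun u hu => hy u (le_trans ht hu)) (hy t ht)
  exact h1.derivWithin ((uniqueDiffOn_Ici t) t Set.self_mem_Ici)

lemma tinv_hasDerivWithinAt (hN : 1 ≤ N) (hp : ∀ j, 1 ≤ j → j ≤ N → 0 < p j) (hc : Canon N c)
    (hy : ∀ t, 0 ≤ t → y t = cf N p c t) {x : ℝ} (hx : 0 ≤ x) :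
    HasDerivWithinAt (tinv y) (1 / slopeAt N p c (tinv y x)) (Ici x) x := by
  obtain ⟨ht0, hfx⟩ := tinv_spec hN hp hc hy hx
  set t := tinv y x with hts
  set s := slopeAt N p c t with hs
  have hsp : 0 < s := slope_pos hN hp hc.1 ht0
  obtain ⟨δ, hδ, hlin⟩ := cf_local (N := N) (p := p) (c := c) t
  have hmem : Ico x (x + s * δ) ∈ 𝓝[Ici x] x :=
    Ico_mem_nhdsGE_of_mem ⟨le_rfl, by nlinarith⟩
  have lin' : HasDerivWithinAt (fun u => t + (u - x) / s) (1 / s) (Ici x) x := by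
    have h1 : HasDerivAt (fun u : ℝ => t + (u - x) / s) (1 / s) x := by
      have := (((hasDerivAt_id x).sub_const x).div_const s).const_add t
      simpa using this
    exact h1.hasDerivWithinAt
  refine lin'.congr_of_eventuallyEq ?_ (by simp [hts])
  filter_upwards [hmem] with u hu
  have h0u : 0 ≤ (u - x) / s := div_nonneg (by linarith [hu.1]) hsp.le
  have hlt : (u - x) / s < δ := by rw [div_lt_iff₀ hsp]; nlinarith [hu.2]
  have heq := hlin _ h0u hlt
  have hval : cf N p c (t + (u - x) / s) = u := by
    rw [heq, hfx]; field_simp; rw [← hs]; ring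
  exact tinv_unique hN hp hc hy (by linarith) hval

end CF

section Key

variable {N : ℕ} {p c d : ℕ → ℝ} {y1 y2 : ℝ → ℝ}

/-- Key monotonicity lemma: under the level comparison `g (d i) ≤ f (c i)`,
increments of the inverse of `y2` are dominated by increments of the inverse of `y1`. -/
lemma key_mono (hN : 1 ≤ N) (hp : ∀ j, 1 ≤ j → j ≤ N → 0 < p j)
    (hc : Canon N c) (hd : Canon N d)
    (hy1 : ∀ t, 0 ≤ t → y1 t = cf N p c t) (hy2 : ∀ t, 0 ≤ t → y2 t = cf N p d t)
    (hlev : ∀ i, 1 ≤ i → i ≤ N → cf N p d (d i) ≤ cf N p c (c i)) :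
    ∀ x x', 0 ≤ x → x ≤ x' → tinv y2 x' - tinv y2 x ≤ tinv y1 x' - tinv y1 x := by
  have hslope : ∀ t : ℝ, 0 ≤ t →
      slopeAt N p c t ≤ slopeAt N p d (tinv y2 (cf N p c t)) := by
    intro t ht
    have hxt : 0 ≤ cf N p c t := cf_nonneg hp t
    obtain ⟨hu0, hgu⟩ := tinv_spec hN hp hd hy2 hxt
    unfold slopeAt
    refine Finset.sum_le_sum_of_subset_of_nonneg ?_ (fun j hj _ => ?_)
    · intro j hj
      rw [Finset.mem_filter] at hj ⊢
      obtain ⟨hjmem, hcj⟩ := hj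
      have hj' := Finset.mem_Icc.mp hjmem
      refine ⟨hjmem, ?_⟩
      by_contra hlt
      push_neg at hlt
      have hstrict := cf_strict hN hp hd.1 hu0 hlt
      have h2 : cf N p d (d j) ≤ cf N p c (c j) := hlev j hj'.1 hj'.2
      have h3 : cf N p c (c j) ≤ cf N p c t := cf_mono hp hcj
      rw [hgu] at hstrict; linarith
    · have hj' := Finset.mem_Icc.mp (Finset.mem_filter.mp hj).1
      exact (hp j hj'.1 hj'.2).le
  have hGcont : ContinuousOn (tinv y2) (Ici 0) := tinv_continuousOn hN hp hd hy2
  have main : ∀ t1 t2 : ℝ, 0 ≤ t1 → t1 ≤ t2 →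
      t1 - tinv y2 (cf N p c t1) ≤ t2 - tinv y2 (cf N p c t2) := by
    intro t1 t2 h0 h12
    set B' : ℝ → ℝ :=
      fun t => 1 - 1 / slopeAt N p d (tinv y2 (cf N p c t)) * slopeAt N p c t with hB'def
    have hB : ContinuousOn (fun t : ℝ => t - tinv y2 (cf N p c t)) (Icc t1 t2) := by
      refine continuousOn_id.sub (hGcont.comp cf_continuous.continuousOn ?_)
      intro t _
      exact cf_nonneg hp t
    have hB' : ∀ t ∈ Ico t1 t2,
        HasDerivWithinAt (fun u : ℝ => u - tinv y2 (cf N p c u)) (B' t) (Ici t) t := by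
      intro t ht
      have ht0 : 0 ≤ t := le_trans h0 ht.1
      have hxt : 0 ≤ cf N p c t := cf_nonneg hp t
      have hcf := cf_hasDerivWithinAt (N := N) (p := p) (c := c) t
      have hG := tinv_hasDerivWithinAt hN hp hd hy2 hxt
      have hmaps : MapsTo (cf N p c) (Ici t) (Ici (cf N p c t)) := fun u hu => cf_mono hp hu
      have hcomp : HasDerivWithinAt (fun u => tinv y2 (cf N p c u))
          (1 / slopeAt N p d (tinv y2 (cf N p c t)) * slopeAt N p c t) (Ici t) t :=
        hG.comp t hcf hmaps
      have : HasDerivWithinAt (fun u : ℝ => u - tinv y2 (cf N p c u)) _ (Ici t) t :=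
        (hasDerivWithinAt_id t (Ici t)).sub hcomp
      simpa [hB'def, one_div] using this
    have hbound : ∀ t ∈ Ico t1 t2, (fun _ : ℝ => (0:ℝ)) t ≤ B' t := by
      intro t ht
      have ht0 : 0 ≤ t := le_trans h0 ht.1
      have hxt : 0 ≤ cf N p c t := cf_nonneg hp t
      have hu0 := (tinv_spec hN hp hd hy2 hxt).1
      have hsd : 0 < slopeAt N p d (tinv y2 (cf N p c t)) := slope_pos hN hp hd.1 hu0
      have h1 : 1 / slopeAt N p d (tinv y2 (cf N p c t)) * slopeAt N p c t ≤ 1 := by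
        rw [one_div_mul_eq_div]
        exact (div_le_one hsd).mpr (hslope t ht0)
      simp only [hB'def]
      linarith
    have := image_le_of_deriv_right_le_deriv_boundary
      (f := fun _ : ℝ => t1 - tinv y2 (cf N p c t1)) (f' := fun _ : ℝ => (0:ℝ))
      (a := t1) (b := t2) continuousOn_const
      (fun x _ => hasDerivWithinAt_const x _ _) le_rfl hB hB' hbound
      (Set.right_mem_Icc.mpr h12)
    exact this
  intro x x' hx hxx'
  have h1 := tinv_spec hN hp hc hy1 hx
  have h1' := tinv_spec hN hp hc hy1 (hx.trans hxx')
  have hm := tinv_mono hN hp hc hy1 hx hxx'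
  have hmain := main (tinv y1 x) (tinv y1 x') h1.1 hm
  rw [h1.2, h1'.2] at hmain
  linarith

/-- Translation of the right-derivative comparison hypothesis into the level comparison. -/
lemma lev_of_rD (hN : 1 ≤ N) (hp : ∀ j, 1 ≤ j → j ≤ N → 0 < p j)
    (hc : Canon N c) (hd : Canon N d)
    (hy1 : ∀ t, 0 ≤ t → y1 t = cf N p c t) (hy2 : ∀ t, 0 ≤ t → y2 t = cf N p d t)
    (h0 : ∀ x : ℝ, 0 ≤ x → rD y1 (tinv y1 x) ≤ rD y2 (tinv y2 x)) :
    ∀ i, 1 ≤ i → i ≤ N → cf N p d (d i) ≤ cf N p c (c i) := by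
  intro i h1i hiN
  obtain ⟨i', rfl⟩ : ∃ i', i = i' + 1 := ⟨i - 1, by omega⟩
  have hci0 : 0 ≤ c (i' + 1) := hc.2.1 _ h1i hiN
  set x := cf N p c (c (i' + 1)) with hx
  have hx0 : 0 ≤ x := cf_nonneg hp _
  have hFx : tinv y1 x = c (i' + 1) := tinv_unique hN hp hc hy1 hci0 rfl
  obtain ⟨hu0, hgu⟩ := tinv_spec hN hp hd hy2 hx0
  have hdiu : d (i' + 1) ≤ tinv y2 x := by
    by_contra hlt
    push_neg at hlt
    have hA : ∑ j ∈ Finset.Icc 1 (i' + 1), p j ≤ slopeAt N p c (c (i' + 1)) := by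
      unfold slopeAt
      refine Finset.sum_le_sum_of_subset_of_nonneg ?_ (fun j hj _ => ?_)
      · intro j hj
        have hj' := Finset.mem_Icc.mp hj
        refine Finset.mem_filter.mpr ⟨Finset.mem_Icc.mpr ⟨hj'.1, by omega⟩, ?_⟩
        exact hc.2.2 j (i' + 1) hj'.1 hj'.2 hiN
      · have hj' := Finset.mem_Icc.mp (Finset.mem_filter.mp hj).1
        exact (hp j hj'.1 hj'.2).le
    have hB : slopeAt N p d (tinv y2 x) ≤ ∑ j ∈ Finset.Icc 1 i', p j := by
      unfold slopeAt
      refine Finset.sum_le_sum_of_subset_of_nonneg ?_ (fun j hj _ => ?_)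
      · intro j hj
        rw [Finset.mem_filter] at hj
        obtain ⟨hjmem, hdj⟩ := hj
        have hj' := Finset.mem_Icc.mp hjmem
        refine Finset.mem_Icc.mpr ⟨hj'.1, ?_⟩
        by_contra hcon
        push_neg at hcon
        have : d (i' + 1) ≤ d j := hd.2.2 (i' + 1) j h1i (by omega) hj'.2
        linarith
      · have hj' := Finset.mem_Icc.mp hj
        exact (hp j hj'.1 (by omega)).le
    have hsum : ∑ j ∈ Finset.Icc 1 (i' + 1), p j
        = (∑ j ∈ Finset.Icc 1 i', p j) + p (i' + 1) :=
      Finset.sum_Icc_succ_top (by omega) p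
    have hpi := hp (i' + 1) h1i hiN
    have h0' := h0 x hx0
    rw [rD_eq hy1 (by rw [hFx]; exact hci0), rD_eq hy2 hu0, hFx] at h0'
    linarith
  calc cf N p d (d (i' + 1)) ≤ cf N p d (tinv y2 x) := cf_mono hp hdiu
    _ = x := hgu

end Key

end S3

/-- comparison of trajectories, Proposition 3.5 of the paper. -/
theorem stmt_3 (N : ℕ) (hN : 1 ≤ N) (a p : ℕ → ℝ) (hap : IsParam N a p)
    (y1 y2 : ℕ → ℝ → ℝ) (h1 : SatisfiesR N a p y1) (h2 : SatisfiesR N a p y2)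
    (h0 : ∀ x : ℝ, 0 ≤ x → rD (y1 0) (tinv (y1 0) x) ≤ rD (y2 0) (tinv (y2 0) x)) :
    ∀ k : ℕ, 1 ≤ k → ∀ t : ℝ, 0 ≤ t → y1 k t ≤ y2 k t := by
  classical
  obtain ⟨ha1, haS, hp⟩ := hap
  have hamono : ∀ i j, 1 ≤ i → i ≤ j → j ≤ N → a i ≤ a j := fun i j hi hij hjN =>
    S3.mono_of_step (fun l h1 h2 => (haS l h1 h2).le) j hjN i hi hij
  obtain ⟨⟨c0, hc01, hc0n, hc0s, hy10⟩, hrec1⟩ := h1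
  obtain ⟨⟨d0, hd01, hd0n, hd0s, hy20⟩, hrec2⟩ := h2
  have hc0 : S3.Canon N c0 :=
    ⟨hc01, hc0n, fun i j hi hij hjN => S3.mono_of_step hc0s j hjN i hi hij⟩
  have hd0 : S3.Canon N d0 :=
    ⟨hd01, hd0n, fun i j hi hij hjN => S3.mono_of_step hd0s j hjN i hi hij⟩
  have hy10' : ∀ t : ℝ, 0 ≤ t → y1 0 t = S3.cf N p c0 t := fun t ht => hy10 t ht
  have hy20' : ∀ t : ℝ, 0 ≤ t → y2 0 t = S3.cf N p d0 t := fun t ht => hy20 t ht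
  have INV : ∀ k : ℕ, ∃ c d : ℕ → ℝ, S3.Canon N c ∧ S3.Canon N d ∧
      (∀ t : ℝ, 0 ≤ t → y1 k t = S3.cf N p c t) ∧ (∀ t : ℝ, 0 ≤ t → y2 k t = S3.cf N p d t) ∧
      (∀ i, 1 ≤ i → i ≤ N → S3.cf N p d (d i) ≤ S3.cf N p c (c i)) := by
    intro k
    induction k with
    | zero =>
      exact ⟨c0, d0, hc0, hd0, hy10', hy20',
        S3.lev_of_rD hN hp hc0 hd0 hy10' hy20' h0⟩
    | succ k ih =>
      obtain ⟨c, d, hc, hd, hy1k, hy2k, hlev⟩ := ih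
      have hKEY := S3.key_mono hN hp hc hd hy1k hy2k hlev
      set c' : ℕ → ℝ := fun j => tinv (y1 k) (a j) - tinv (y1 k) (a 1) with hc'def
      set d' : ℕ → ℝ := fun j => tinv (y2 k) (a j) - tinv (y2 k) (a 1) with hd'def
      have ha0 : ∀ j, 1 ≤ j → j ≤ N → 0 ≤ a j := fun j hj hjN =>
        le_of_lt (lt_of_lt_of_le ha1 (hamono 1 j le_rfl hj hjN))
      have hc'mono : ∀ i j, 1 ≤ i → i ≤ j → j ≤ N → c' i ≤ c' j := by
        intro i j hi hij hjN
        have := S3.tinv_mono hN hp hc hy1k (ha0 i hi (hij.trans hjN)) (hamono i j hi hij hjN)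
        simp only [hc'def]; linarith
      have hd'mono : ∀ i j, 1 ≤ i → i ≤ j → j ≤ N → d' i ≤ d' j := by
        intro i j hi hij hjN
        have := S3.tinv_mono hN hp hd hy2k (ha0 i hi (hij.trans hjN)) (hamono i j hi hij hjN)
        simp only [hd'def]; linarith
      have hc'1 : c' 1 = 0 := by simp [hc'def]
      have hd'1 : d' 1 = 0 := by simp [hd'def]
      have hc' : S3.Canon N c' := ⟨hc'1, fun j hj hjN => by
        have := hc'mono 1 j le_rfl hj hjN; rw [hc'1] at this; exact this, hc'mono⟩
      have hd' : S3.Canon N d' := ⟨hd'1, fun j hj hjN => by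
        have := hd'mono 1 j le_rfl hj hjN; rw [hd'1] at this; exact this, hd'mono⟩
      have hy1k1 : ∀ t : ℝ, 0 ≤ t → y1 (k + 1) t = S3.cf N p c' t := by
        intro t ht
        refine (hrec1 k t ht).trans (Finset.sum_congr rfl fun j _ => ?_)
        congr 1
        simp only [hc'def]; ring
      have hy2k1 : ∀ t : ℝ, 0 ≤ t → y2 (k + 1) t = S3.cf N p d' t := by
        intro t ht
        refine (hrec2 k t ht).trans (Finset.sum_congr rfl fun j _ => ?_)
        congr 1
        simp only [hd'def]; ring
      have hlev' : ∀ i, 1 ≤ i → i ≤ N → S3.cf N p d' (d' i) ≤ S3.cf N p c' (c' i) := by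
        intro i hi hiN
        refine Finset.sum_le_sum fun j hj => ?_
        have hj' := Finset.mem_Icc.mp hj
        refine mul_le_mul_of_nonneg_left ?_ (hp j hj'.1 hj'.2).le
        have hdiff : d' i - d' j = tinv (y2 k) (a i) - tinv (y2 k) (a j) := by
          simp only [hd'def]; ring
        have hdiff' : c' i - c' j = tinv (y1 k) (a i) - tinv (y1 k) (a j) := by
          simp only [hc'def]; ring
        rcases le_total (a j) (a i) with hle | hle
        · have := hKEY (a j) (a i) (ha0 j hj'.1 hj'.2) hle
          exact S3.pos'_mono (by rw [hdiff, hdiff']; linarith)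
        · have := S3.tinv_mono hN hp hd hy2k (ha0 i hi hiN) hle
          calc pos' (d' i - d' j) = 0 := S3.pos'_of_nonpos (by rw [hdiff]; linarith)
            _ ≤ pos' (c' i - c' j) := S3.pos'_nonneg _
      exact ⟨c', d', hc', hd', hy1k1, hy2k1, hlev'⟩
  intro k hk t ht
  obtain ⟨k, rfl⟩ : ∃ m, k = m + 1 := ⟨k - 1, by omega⟩
  obtain ⟨c, d, hc, hd, hy1k, hy2k, hlev⟩ := INV k
  have hKEY := S3.key_mono hN hp hc hd hy1k hy2k hlev
  rw [hrec1 k t ht, hrec2 k t ht]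
  refine Finset.sum_le_sum fun j hj => ?_
  have hj' := Finset.mem_Icc.mp hj
  have hdom := hKEY (a 1) (a j) ha1.le (hamono 1 j le_rfl hj'.1 hj'.2)
  exact mul_le_mul_of_nonneg_left (S3.pos'_mono (by linarith)) (hp j hj'.1 hj'.2).le
end
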